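/- arXiv:2204.08059 — 5 statements merged into one kernel-verified Lean document; each statement's English description precedes it below -/
import Mathlib

section
/- Let S be a real d×d matrix, Σₒ a positive-definite symmetric real d×d matrix, and let {Xₙ} be the Gauss-Markov chain with X₁ ~ N(0,Σₒ) and X_{n+1} = S Xₙ + Gₙ where Gₙ are i.i.d. standard Gaussians on ℝ^d independent of X₁. Then for each N ≥ 1 the log Radon–Nikodym derivative of the law of (X₁,…,X_N) with respect to the law of (X_N,…,X₁), evaluated at (X₁,…,X_N), equals (1/2)⟨X₁,(I−Σₒ⁻¹−SᵀS)X₁⟩ + (1/2)⟨X_N,(Σₒ⁻¹+SᵀS−I)X_N⟩ + Σ_{n=2}^N ⟨Xₙ,(S−Sᵀ)X_{n−1}⟩. -/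
open Matrix MeasureTheory

private noncomputable def gmE {d N : ℕ} (S So : Matrix (Fin d) (Fin d) ℝ)
    (x : Fin (N + 1) → Fin d → ℝ) : ℝ :=
  -(1 / 2) * (x 0 ⬝ᵥ So⁻¹.mulVec (x 0))
    - (1 / 2) * ∑ n : Fin N,
        (x n.succ - S.mulVec (x n.castSucc)) ⬝ᵥ (x n.succ - S.mulVec (x n.castSucc))

private lemma gmE_continuous {d N : ℕ} (S So : Matrix (Fin d) (Fin d) ℝ) :
    Continuous (gmE (d := d) (N := N) S So) := by
  refine Continuous.sub (continuous_const.mul ?_) (continuous_const.mul ?_)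
  · exact (continuous_apply 0).dotProduct
      (continuous_const.matrix_mulVec (continuous_apply 0))
  · exact continuous_finset_sum _ fun n _ =>
      (((continuous_apply _).sub (continuous_const.matrix_mulVec (continuous_apply _)))).dotProduct
      (((continuous_apply _).sub (continuous_const.matrix_mulVec (continuous_apply _))))

private lemma gm_rev_measurePreserving (d N : ℕ) :
    MeasurePreserving (fun (x : Fin (N + 1) → Fin d → ℝ) i => x (Fin.rev i))
      volume volume := by
  have h := volume_measurePreserving_piCongrLeft (fun _ : Fin (N + 1) => Fin d → ℝ) Fin.revPerm
  convert h using 1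
  ext x i
  simp [MeasurableEquiv.coe_piCongrLeft, Equiv.piCongrLeft_apply_eq_cast]

private lemma gm_rev_coe (d N : ℕ) :
    ⇑(MeasurableEquiv.piCongrLeft (fun _ : Fin (N + 1) => Fin d → ℝ) Fin.revPerm)
      = fun (x : Fin (N + 1) → Fin d → ℝ) i => x (Fin.rev i) := by
  ext x i
  simp [MeasurableEquiv.coe_piCongrLeft, Equiv.piCongrLeft_apply_eq_cast]

private lemma gm_telescope {N : ℕ} (g : Fin (N + 1) → ℝ) :
    ∑ n : Fin N, (g n.castSucc - g n.succ) = g 0 - g (Fin.last N) := by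
  induction N with
  | zero => simp
  | succ m ih =>
      have h := ih (fun i => g i.castSucc)
      rw [Fin.sum_univ_castSucc]
      simp only [Fin.succ_castSucc, h, Fin.castSucc_zero, Fin.succ_last]
      ring

private lemma gm_key {d : ℕ} (S : Matrix (Fin d) (Fin d) ℝ) (a b : Fin d → ℝ) :
    -(1 / 2 : ℝ) * ((a - S.mulVec b) ⬝ᵥ (a - S.mulVec b))
        + (1 / 2) * ((b - S.mulVec a) ⬝ᵥ (b - S.mulVec a))
      = 1 / 2 * (b ⬝ᵥ ((1 - Sᵀ * S).mulVec b)) - 1 / 2 * (a ⬝ᵥ ((1 - Sᵀ * S).mulVec a))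
        + a ⬝ᵥ ((S - Sᵀ).mulVec b) := by
  have h1 : ∀ u v : Fin d → ℝ, u ⬝ᵥ ((Sᵀ * S).mulVec v) = (S.mulVec u) ⬝ᵥ (S.mulVec v) := by
    intro u v
    rw [← Matrix.mulVec_mulVec, Matrix.dotProduct_mulVec u, Matrix.vecMul_transpose]
  have h2 : ∀ u v : Fin d → ℝ, u ⬝ᵥ (Sᵀ.mulVec v) = (S.mulVec u) ⬝ᵥ v := by
    intro u v
    rw [Matrix.dotProduct_mulVec u, Matrix.vecMul_transpose]
  simp only [Matrix.sub_mulVec, Matrix.one_mulVec, dotProduct_sub, sub_dotProduct,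
    h1, h2]
  rw [dotProduct_comm (S.mulVec b) a, dotProduct_comm (S.mulVec a) b]
  ring

private lemma gmE_sub {d N : ℕ} (S So : Matrix (Fin d) (Fin d) ℝ)
    (x : Fin (N + 1) → Fin d → ℝ) :
    gmE S So x - gmE S So (fun i => x (Fin.rev i))
      = 1 / 2 * (x 0 ⬝ᵥ ((1 - So⁻¹ - Sᵀ * S).mulVec (x 0)))
        + 1 / 2 * (x (Fin.last N) ⬝ᵥ ((So⁻¹ + Sᵀ * S - 1).mulVec (x (Fin.last N))))
        + ∑ n : Fin N, x n.succ ⬝ᵥ ((S - Sᵀ).mulVec (x n.castSucc)) := by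
  have hrev : ∑ n : Fin N,
      (x (Fin.rev n.succ) - S.mulVec (x (Fin.rev n.castSucc))) ⬝ᵥ
        (x (Fin.rev n.succ) - S.mulVec (x (Fin.rev n.castSucc)))
      = ∑ n : Fin N,
      (x n.castSucc - S.mulVec (x n.succ)) ⬝ᵥ (x n.castSucc - S.mulVec (x n.succ)) := by
    refine Fintype.sum_equiv Fin.revPerm _ _ fun n => ?_
    simp [Fin.rev_succ, Fin.rev_castSucc]
  have h0 : Fin.rev (0 : Fin (N + 1)) = Fin.last N := by simp
  simp only [gmE, h0, hrev]
  have hsum : ∑ n : Fin N,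
      (-(1 / 2 : ℝ) * ((x n.succ - S.mulVec (x n.castSucc)) ⬝ᵥ (x n.succ - S.mulVec (x n.castSucc)))
        + (1 / 2) * ((x n.castSucc - S.mulVec (x n.succ)) ⬝ᵥ (x n.castSucc - S.mulVec (x n.succ))))
      = ∑ n : Fin N,
      ((1 / 2 * (x n.castSucc ⬝ᵥ ((1 - Sᵀ * S).mulVec (x n.castSucc)))
          - 1 / 2 * (x n.succ ⬝ᵥ ((1 - Sᵀ * S).mulVec (x n.succ))))
        + x n.succ ⬝ᵥ ((S - Sᵀ).mulVec (x n.castSucc))) := by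
    refine Finset.sum_congr rfl fun n _ => ?_
    have := gm_key S (x n.succ) (x n.castSucc)
    linarith [this]
  have hdist : ∑ n : Fin N,
      (-(1 / 2 : ℝ) * ((x n.succ - S.mulVec (x n.castSucc)) ⬝ᵥ (x n.succ - S.mulVec (x n.castSucc)))
        + (1 / 2) * ((x n.castSucc - S.mulVec (x n.succ)) ⬝ᵥ (x n.castSucc - S.mulVec (x n.succ))))
      = -(1 / 2) * ∑ n : Fin N,
          ((x n.succ - S.mulVec (x n.castSucc)) ⬝ᵥ (x n.succ - S.mulVec (x n.castSucc)))
        + (1 / 2) * ∑ n : Fin N,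
          ((x n.castSucc - S.mulVec (x n.succ)) ⬝ᵥ (x n.castSucc - S.mulVec (x n.succ))) := by
    rw [Finset.sum_add_distrib, ← Finset.mul_sum, ← Finset.mul_sum]
  have hc : ∑ n : Fin N,
      ((1 / 2 * (x n.castSucc ⬝ᵥ ((1 - Sᵀ * S).mulVec (x n.castSucc)))
          - 1 / 2 * (x n.succ ⬝ᵥ ((1 - Sᵀ * S).mulVec (x n.succ))))
        + x n.succ ⬝ᵥ ((S - Sᵀ).mulVec (x n.castSucc)))
      = ∑ n : Fin N,
          (1 / 2 * (x n.castSucc ⬝ᵥ ((1 - Sᵀ * S).mulVec (x n.castSucc)))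
            - 1 / 2 * (x n.succ ⬝ᵥ ((1 - Sᵀ * S).mulVec (x n.succ))))
        + ∑ n : Fin N, x n.succ ⬝ᵥ ((S - Sᵀ).mulVec (x n.castSucc)) :=
    Finset.sum_add_distrib
  have htel : ∑ n : Fin N,
      (1 / 2 * (x n.castSucc ⬝ᵥ ((1 - Sᵀ * S).mulVec (x n.castSucc)))
        - 1 / 2 * (x n.succ ⬝ᵥ ((1 - Sᵀ * S).mulVec (x n.succ))))
      = 1 / 2 * (x 0 ⬝ᵥ ((1 - Sᵀ * S).mulVec (x 0)))
        - 1 / 2 * (x (Fin.last N) ⬝ᵥ ((1 - Sᵀ * S).mulVec (x (Fin.last N)))) :=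
    gm_telescope (fun i => 1 / 2 * (x i ⬝ᵥ ((1 - Sᵀ * S).mulVec (x i))))
  have expand : x 0 ⬝ᵥ ((1 - So⁻¹ - Sᵀ * S).mulVec (x 0))
      = x 0 ⬝ᵥ ((1 - Sᵀ * S).mulVec (x 0)) - x 0 ⬝ᵥ So⁻¹.mulVec (x 0) := by
    simp only [Matrix.sub_mulVec, dotProduct_sub]
    ring
  have expand2 : x (Fin.last N) ⬝ᵥ ((So⁻¹ + Sᵀ * S - 1).mulVec (x (Fin.last N)))
      = x (Fin.last N) ⬝ᵥ So⁻¹.mulVec (x (Fin.last N))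
        - x (Fin.last N) ⬝ᵥ ((1 - Sᵀ * S).mulVec (x (Fin.last N))) := by
    simp only [Matrix.sub_mulVec, Matrix.add_mulVec, dotProduct_sub,
      dotProduct_add]
    ring
  linarith [hdist, hsum, hc, htel, expand, expand2]

/-- For the centered Gauss–Markov chain with drift `S` and initial
covariance `Σₒ ≻ 0`, the log Radon–Nikodym derivative of the law `μ⁺` of
`(X₁,…,X_N)` with respect to the law `μ⁻` of `(X_N,…,X₁)` is the explicit
quadratic form (here the chain has length `N + 1`, covering every `N ≥ 1`;
index `0` is `X₁` and `Fin.last N` is `X_N`). -/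
theorem gauss_markov_entropy_production_quadratic_form
    {d N : ℕ} (S So : Matrix (Fin d) (Fin d) ℝ) (hSo : So.PosDef)
    (μplus μminus : Measure (Fin (N + 1) → Fin d → ℝ))
    (hplus : μplus = volume.withDensity (fun x => ENNReal.ofReal
      ((Real.sqrt ((2 * Real.pi) ^ ((N + 1) * d) * So.det))⁻¹ *
        Real.exp (-(1 / 2) * (x 0 ⬝ᵥ So⁻¹.mulVec (x 0))
          - (1 / 2) * ∑ n : Fin N,
              (x n.succ - S.mulVec (x n.castSucc)) ⬝ᵥ
                (x n.succ - S.mulVec (x n.castSucc))))))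
    (hminus : μminus = μplus.map (fun x i => x (Fin.rev i))) :
    ∀ᵐ x ∂μplus,
      Real.log ((μplus.rnDeriv μminus x).toReal)
        = 1 / 2 * (x 0 ⬝ᵥ ((1 - So⁻¹ - Sᵀ * S).mulVec (x 0)))
          + 1 / 2 * (x (Fin.last N) ⬝ᵥ ((So⁻¹ + Sᵀ * S - 1).mulVec (x (Fin.last N))))
          + ∑ n : Fin N, x n.succ ⬝ᵥ ((S - Sᵀ).mulVec (x n.castSucc)) := by
  set c : ℝ := Real.sqrt ((2 * Real.pi) ^ ((N + 1) * d) * So.det) with hc_def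
  have hc_pos : 0 < c :=
    Real.sqrt_pos.mpr (mul_pos (pow_pos (by positivity) _) hSo.det_pos)
  set R : (Fin (N + 1) → Fin d → ℝ) → (Fin (N + 1) → Fin d → ℝ) :=
    fun x i => x (Fin.rev i) with hR_def
  have hRR : ∀ x, R (R x) = x := by
    intro x; funext i; simp [hR_def, Fin.rev_rev]
  have hRmp : MeasurePreserving R volume volume := gm_rev_measurePreserving d N
  have hRemb : MeasurableEmbedding R := by
    rw [hR_def, ← gm_rev_coe d N]
    exact (MeasurableEquiv.piCongrLeft (fun _ : Fin (N + 1) => Fin d → ℝ)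
      Fin.revPerm).measurableEmbedding
  set g : (Fin (N + 1) → Fin d → ℝ) → ENNReal :=
    fun x => ENNReal.ofReal (c⁻¹ * Real.exp (gmE S So x)) with hg_def
  have hg_meas : Measurable g :=
    ENNReal.measurable_ofReal.comp
      ((continuous_const.mul (Real.continuous_exp.comp (gmE_continuous S So))).measurable)
  have hplus' : μplus = volume.withDensity g := hplus
  have hminus' : μminus = volume.withDensity (g ∘ R) := by
    rw [hminus, hplus']
    refine Measure.ext fun s hs => ?_
    rw [Measure.map_apply hRmp.measurable hs,
      withDensity_apply _ (hRmp.measurable hs), withDensity_apply _ hs]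
    calc ∫⁻ x in R ⁻¹' s, g x = ∫⁻ x in R ⁻¹' s, (g ∘ R) (R x) := by
          refine setLIntegral_congr_fun (hRmp.measurable hs) fun x _ => ?_
          simp [Function.comp, hRR x]
      _ = ∫⁻ y in R '' (R ⁻¹' s), (g ∘ R) y := hRmp.setLIntegral_comp_emb hRemb _ _
      _ = ∫⁻ y in s, (g ∘ R) y := by
          rw [Set.image_preimage_eq s (fun y => ⟨R y, hRR y⟩)]
  set ρ : (Fin (N + 1) → Fin d → ℝ) → ENNReal :=
    fun x => ENNReal.ofReal (Real.exp (gmE S So x - gmE S So (R x))) with hρ_def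
  have hρ_meas : Measurable ρ :=
    ENNReal.measurable_ofReal.comp
      (Real.measurable_exp.comp
        (((gmE_continuous S So).measurable).sub
          (((gmE_continuous S So).measurable).comp hRmp.measurable)))
  have hmul : ∀ x, (g ∘ R) x * ρ x = g x := by
    intro x
    simp only [Function.comp, hg_def, hρ_def]
    rw [← ENNReal.ofReal_mul (by positivity)]
    congr 1
    rw [mul_assoc, ← Real.exp_add]
    congr 2
    ring
  have hplus2 : μplus = μminus.withDensity ρ := by
    rw [hminus', ← withDensity_mul volume (hg_meas.comp hRmp.measurable) hρ_meas, hplus']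
    congr 1
    funext x
    exact (hmul x).symm
  have hsf : SigmaFinite μminus := by
    rw [hminus']
    exact SigmaFinite.withDensity_of_ne_top' fun x => ENNReal.ofReal_ne_top
  have h_rn : μplus.rnDeriv μminus =ᵐ[μminus] ρ := by
    rw [hplus2]
    exact Measure.rnDeriv_withDensity μminus hρ_meas
  have hac : μplus ≪ μminus := by
    rw [hplus2]; exact withDensity_absolutelyContinuous _ _
  have h_rn' : μplus.rnDeriv μminus =ᵐ[μplus] ρ := hac.ae_le h_rn
  filter_upwards [h_rn'] with x hx
  rw [hx, hρ_def]
  simp only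
  rw [ENNReal.toReal_ofReal (Real.exp_nonneg _), Real.log_exp]
  exact gmE_sub S So x
end

section
/- Let Q_N be a Hermitian block tridiagonal quasi-Toeplitz matrix with blocks A, D, B, E as above, let T_N be its bulk (the N×N block Toeplitz part with diagonal D and off-diagonals E, E†). If the smallest eigenvalue of Q_N is at least q for some real q > 0, then the smallest eigenvalue of T_N is at least q (in particular T_N is invertible), and the smallest eigenvalue of the 2×2-block boundary matrix S_N := [[A − E†C†T_N⁻¹CE, −E†C†T_N⁻¹R†E†],[−E R T_N⁻¹ C E, B − E R T_N⁻¹ R† E†]] is at least q, where C = (I,0,…,0)ᵀ and R = (0,…,0,I). -/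
open Matrix

/-- The Hermitian block tridiagonal quasi-Toeplitz matrix `Q_N` with diagonal
blocks `A, D, …, D, B` and off-diagonal blocks `E`, `Eᴴ`. -/
def qtMatrix {d : ℕ} (N : ℕ) (A D B E : Matrix (Fin d) (Fin d) ℂ) :
    Matrix (Fin (N + 2) × Fin d) (Fin (N + 2) × Fin d) ℂ :=
  fun p q =>
    if (p.1 : ℕ) = (q.1 : ℕ) then
      (if (p.1 : ℕ) = 0 then A else if (p.1 : ℕ) = N + 1 then B else D) p.2 q.2
    else if (p.1 : ℕ) = (q.1 : ℕ) + 1 then E p.2 q.2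
    else if (q.1 : ℕ) = (p.1 : ℕ) + 1 then Eᴴ p.2 q.2
    else 0

/-- The `N×N` block tridiagonal Toeplitz bulk `T_N` with diagonal `D` and
off-diagonals `E`, `Eᴴ`. -/
def bulkMatrix {d : ℕ} (N : ℕ) (D E : Matrix (Fin d) (Fin d) ℂ) :
    Matrix (Fin N × Fin d) (Fin N × Fin d) ℂ :=
  fun p q =>
    if (p.1 : ℕ) = (q.1 : ℕ) then D p.2 q.2
    else if (p.1 : ℕ) = (q.1 : ℕ) + 1 then E p.2 q.2
    else if (q.1 : ℕ) = (p.1 : ℕ) + 1 then Eᴴ p.2 q.2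
    else 0

/-- `C = (I, 0, …, 0)ᵀ`. -/
def matC (d N : ℕ) : Matrix (Fin N × Fin d) (Fin d) ℂ :=
  fun p b => if (p.1 : ℕ) = 0 ∧ p.2 = b then 1 else 0

/-- `R = (0, …, 0, I)`. -/
def matR (d N : ℕ) : Matrix (Fin d) (Fin N × Fin d) ℂ :=
  fun a q => if (q.1 : ℕ) = N - 1 ∧ a = q.2 then 1 else 0

/-- The `2×2`-block boundary (Schur complement) matrix `S_N`. -/
noncomputable def boundaryMatrix {d : ℕ} (N : ℕ)
    (A D B E : Matrix (Fin d) (Fin d) ℂ) :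
    Matrix (Fin d ⊕ Fin d) (Fin d ⊕ Fin d) ℂ :=
  Matrix.fromBlocks
    (A - Eᴴ * (matC d N)ᴴ * (bulkMatrix N D E)⁻¹ * matC d N * E)
    (-(Eᴴ * (matC d N)ᴴ * (bulkMatrix N D E)⁻¹ * (matR d N)ᴴ * Eᴴ))
    (-(E * matR d N * (bulkMatrix N D E)⁻¹ * matC d N * E))
    (B - E * matR d N * (bulkMatrix N D E)⁻¹ * (matR d N)ᴴ * Eᴴ)

/-- The index identification splitting off the two boundary blocks. -/
def idxEquiv (d N : ℕ) : ((Fin d ⊕ Fin d) ⊕ (Fin N × Fin d)) ≃ (Fin (N + 2) × Fin d) where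
  toFun := Sum.elim (Sum.elim (fun a => (0, a)) (fun a => (Fin.last (N + 1), a)))
    (fun p => (p.1.succ.castSucc, p.2))
  invFun p :=
    if _ : (p.1 : ℕ) = 0 then Sum.inl (Sum.inl p.2)
    else if _ : (p.1 : ℕ) = N + 1 then Sum.inl (Sum.inr p.2)
    else Sum.inr (⟨(p.1 : ℕ) - 1, by omega⟩, p.2)
  left_inv x := by
    rcases x with (a | a) | ⟨i, a⟩
    · simp
    · simp [Fin.ext_iff]
    · have h1 : ((i.succ.castSucc : Fin (N + 2)) : ℕ) = (i : ℕ) + 1 := by simp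
      have := i.isLt
      simp only [Sum.elim_inr, h1]
      rw [dif_neg (by omega), dif_neg (by omega)]
      simp [Fin.ext_iff]
  right_inv p := by
    rcases p with ⟨j, a⟩
    dsimp only
    split_ifs with h h'
    · simp [Prod.ext_iff, Fin.ext_iff, h.symm]; omega
    · simp [Prod.ext_iff, Fin.ext_iff, h'.symm]
    · have := j.isLt
      simp only [Sum.elim_inr, Prod.mk.injEq, Fin.ext_iff]
      constructor
      · simp; omega
      · trivial

lemma entryCE {d N : ℕ} (E : Matrix (Fin d) (Fin d) ℂ) (a : Fin d) (p : Fin N × Fin d) :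
    (Eᴴ * (matC d N)ᴴ) a p = if (p.1 : ℕ) = 0 then Eᴴ a p.2 else 0 := by
  rcases p with ⟨j, b⟩
  simp only [mul_apply, conjTranspose_apply, matC]
  by_cases h : (j : ℕ) = 0 <;>
    simp [h, apply_ite (starRingEnd ℂ), eq_comm, mul_ite, Finset.sum_ite_eq]

lemma entryRE {d N : ℕ} (E : Matrix (Fin d) (Fin d) ℂ) (a : Fin d) (p : Fin N × Fin d) :
    (E * matR d N) a p = if (p.1 : ℕ) = N - 1 then E a p.2 else 0 := by
  rcases p with ⟨j, b⟩
  simp only [mul_apply, matR]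
  by_cases h : (j : ℕ) = N - 1 <;>
    simp [h, mul_ite, Finset.sum_ite_eq, eq_comm]

set_option linter.unreachableTactic false in
set_option linter.unusedTactic false in
lemma qt_submatrix {d N : ℕ} (hN : 1 ≤ N) (A D B E : Matrix (Fin d) (Fin d) ℂ) :
    (qtMatrix N A D B E).submatrix (idxEquiv d N) (idxEquiv d N) =
      fromBlocks (fromBlocks A 0 0 B)
        (fromRows (Eᴴ * (matC d N)ᴴ) (E * matR d N))
        (fromRows (Eᴴ * (matC d N)ᴴ) (E * matR d N))ᴴ
        (bulkMatrix N D E) := by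
  ext i j
  rcases i with (a | a) | ⟨i, a⟩ <;> rcases j with (b | b) | ⟨j, b⟩ <;>
    simp only [submatrix_apply, idxEquiv, Equiv.coe_fn_mk, Sum.elim_inl, Sum.elim_inr,
      fromBlocks_apply₁₁, fromBlocks_apply₁₂, fromBlocks_apply₂₁, fromBlocks_apply₂₂,
      conjTranspose_apply, fromRows_apply_inl, fromRows_apply_inr, Matrix.zero_apply,
      entryCE, entryRE, qtMatrix, bulkMatrix, Fin.val_zero, Fin.val_last,
      Fin.coe_castSucc, Fin.val_succ] <;>
    (try have hi := i.isLt) <;> (try have hj := j.isLt) <;>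
    split_ifs <;> first | rfl | (exfalso; omega) | (simp_all; done) | (simp_all; omega) | (simp_all; split_ifs <;> (try have := i.isLt) <;> (try have := j.isLt) <;> first | rfl | (exfalso; omega) | simp_all)

lemma dot_reindex {ι ι' : Type*} [Fintype ι] [Fintype ι'] (e : ι' ≃ ι) (v w : ι' → ℂ) :
    (v ∘ e.symm) ⬝ᵥ (w ∘ e.symm) = v ⬝ᵥ w := by
  simp only [dotProduct, Function.comp]
  exact Fintype.sum_equiv e.symm _ _ (fun j => rfl)

lemma rayleigh_reindex {ι ι' : Type*} [Fintype ι] [Fintype ι']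
    (e : ι' ≃ ι) (M : Matrix ι ι ℂ) (v : ι' → ℂ) :
    star (v ∘ e.symm) ⬝ᵥ M *ᵥ (v ∘ e.symm) = star v ⬝ᵥ (M.submatrix e e) *ᵥ v := by
  have hstar : star (v ∘ e.symm) = (star v) ∘ e.symm := rfl
  rw [hstar, submatrix_mulVec_equiv]
  have h2 : ((M *ᵥ (v ∘ ⇑e.symm)) ∘ ⇑e) ∘ ⇑e.symm = M *ᵥ (v ∘ ⇑e.symm) := by
    funext i; simp
  conv_lhs => rw [← h2]
  exact dot_reindex e _ _

lemma re_star_dot {ι : Type*} [Fintype ι] (v : ι → ℂ) :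
    (star v ⬝ᵥ v).re = ∑ i, Complex.normSq (v i) := by
  simp only [dotProduct, Complex.re_sum, Pi.star_apply]
  refine Finset.sum_congr rfl fun i _ => ?_
  rw [Complex.star_def, mul_comm, Complex.mul_conj, Complex.ofReal_re]

lemma re_star_dot_nonneg {ι : Type*} [Fintype ι] (v : ι → ℂ) :
    0 ≤ (star v ⬝ᵥ v).re := by
  rw [re_star_dot]
  exact Finset.sum_nonneg fun i _ => Complex.normSq_nonneg _

lemma eq_zero_of_re_star_dot {ι : Type*} [Fintype ι] (v : ι → ℂ)
    (h : (star v ⬝ᵥ v).re = 0) : v = 0 := by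
  rw [re_star_dot] at h
  funext i
  have := (Finset.sum_eq_zero_iff_of_nonneg
    (fun i _ => Complex.normSq_nonneg (v i))).mp h i (Finset.mem_univ i)
  simpa [Complex.normSq_eq_zero] using this

lemma star_sum_elim {α β : Type*} (w : α → ℂ) (u : β → ℂ) :
    star (Sum.elim w u) = Sum.elim (star w) (star u) := by
  funext i; rcases i with i | i <;> rfl

/-- a positive lower bound `q` for the Rayleigh quotient of `Q_N`
passes to the bulk matrix `T_N` (which is then invertible) and to the boundary
matrix `S_N`. -/
theorem qtMatrix_rayleigh_lower_bound_bulk_boundary {d : ℕ} (N : ℕ) (hN : 1 ≤ N)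
    (A D B E : Matrix (Fin d) (Fin d) ℂ)
    (hA : A.IsHermitian) (hD : D.IsHermitian) (hB : B.IsHermitian)
    (q : ℝ) (hq : 0 < q)
    (hQ : ∀ z : Fin (N + 2) × Fin d → ℂ,
      q * (star z ⬝ᵥ z).re ≤ (star z ⬝ᵥ (qtMatrix N A D B E).mulVec z).re) :
    (∀ z : Fin N × Fin d → ℂ,
      q * (star z ⬝ᵥ z).re ≤ (star z ⬝ᵥ (bulkMatrix N D E).mulVec z).re) ∧
    IsUnit (bulkMatrix N D E) ∧
    (∀ z : Fin d ⊕ Fin d → ℂ,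
      q * (star z ⬝ᵥ z).re ≤ (star z ⬝ᵥ (boundaryMatrix N A D B E).mulVec z).re) := by
  set T := bulkMatrix N D E with hT
  set U := fromRows (Eᴴ * (matC d N)ᴴ) (E * matR d N) with hU
  set M₀ := (fromBlocks A 0 0 B : Matrix (Fin d ⊕ Fin d) (Fin d ⊕ Fin d) ℂ) with hM₀
  have key : ∀ (w : Fin d ⊕ Fin d → ℂ) (u : Fin N × Fin d → ℂ),
      q * (star (Sum.elim w u) ⬝ᵥ Sum.elim w u).re ≤
        (star (Sum.elim w u) ⬝ᵥ (fromBlocks M₀ U Uᴴ T) *ᵥ (Sum.elim w u)).re := by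
    intro w u
    have h1 := hQ (Sum.elim w u ∘ (idxEquiv d N).symm)
    have hstar : star (Sum.elim w u ∘ (idxEquiv d N).symm)
        = (star (Sum.elim w u)) ∘ (idxEquiv d N).symm := rfl
    rw [rayleigh_reindex (idxEquiv d N) (qtMatrix N A D B E) (Sum.elim w u),
      qt_submatrix hN A D B E, hstar, dot_reindex] at h1
    exact h1
  -- Part 1: the bulk bound
  have hbulk : ∀ z : Fin N × Fin d → ℂ,
      q * (star z ⬝ᵥ z).re ≤ (star z ⬝ᵥ T *ᵥ z).re := by
    intro z
    have h := key 0 z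
    simpa [star_sum_elim, fromBlocks_mulVec, sumElim_dotProduct_sumElim,
      Sum.elim_comp_inl, Sum.elim_comp_inr, mulVec_zero, star_zero,
      zero_dotProduct, dotProduct_zero] using h
  -- Part 2: invertibility
  have hdet : T.det ≠ 0 := by
    intro hd
    obtain ⟨v, hv0, hv⟩ := (Matrix.exists_mulVec_eq_zero_iff).mpr hd
    have h2 := hbulk v
    rw [hv] at h2
    simp only [dotProduct_zero, Complex.zero_re] at h2
    have h3 : (star v ⬝ᵥ v).re = 0 := by
      have := re_star_dot_nonneg v
      nlinarith
    exact hv0 (eq_zero_of_re_star_dot v h3)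
  have hunit : IsUnit T := (Matrix.isUnit_iff_isUnit_det T).mpr (Ne.isUnit hdet)
  refine ⟨hbulk, hunit, ?_⟩
  -- Part 3: the boundary bound
  have hS : boundaryMatrix N A D B E = M₀ - U * T⁻¹ * Uᴴ := by
    rw [hU, conjTranspose_fromRows_eq_fromCols_conjTranspose, Matrix.fromRows_mul,
      fromRows_mul_fromCols]
    ext (i | i) (j | j) <;>
      simp [boundaryMatrix, fromBlocks, hM₀, hT, Matrix.mul_assoc,
        conjTranspose_mul, Matrix.sub_apply, Matrix.neg_apply]
  intro w
  set u : Fin N × Fin d → ℂ := -(T⁻¹ *ᵥ (Uᴴ *ᵥ w)) with hu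
  have hk := key w u
  have hTu : T *ᵥ u = -(Uᴴ *ᵥ w) := by
    rw [hu, Matrix.mulVec_neg, Matrix.mulVec_mulVec, ← Matrix.mulVec_mulVec,
      Matrix.mulVec_mulVec, Matrix.mul_nonsing_inv _ ((Matrix.isUnit_iff_isUnit_det T).mp hunit),
      Matrix.one_mulVec]
  have hUu : U *ᵥ u = -((U * T⁻¹ * Uᴴ) *ᵥ w) := by
    rw [hu, Matrix.mulVec_neg, Matrix.mulVec_mulVec, Matrix.mulVec_mulVec]
  have hRHS : (star (Sum.elim w u) ⬝ᵥ (fromBlocks M₀ U Uᴴ T) *ᵥ (Sum.elim w u))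
      = star w ⬝ᵥ (boundaryMatrix N A D B E) *ᵥ w := by
    rw [fromBlocks_mulVec, star_sum_elim, sumElim_dotProduct_sumElim,
      Sum.elim_comp_inl, Sum.elim_comp_inr, hTu, hUu, hS]
    simp [Matrix.sub_mulVec, sub_eq_add_neg, Matrix.add_mulVec, Matrix.neg_mulVec,
      dotProduct_add, dotProduct_neg]
  have hLHS : (star (Sum.elim w u) ⬝ᵥ Sum.elim w u).re
      = (star w ⬝ᵥ w).re + (star u ⬝ᵥ u).re := by
    rw [star_sum_elim, sumElim_dotProduct_sumElim, Complex.add_re]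
  rw [hRHS, hLHS] at hk
  have : q * (star w ⬝ᵥ w).re ≤ q * ((star w ⬝ᵥ w).re + (star u ⬝ᵥ u).re) := by
    have := re_star_dot_nonneg u
    nlinarith
  exact this.trans hk
end

section
/- Let T_N be the Hermitian block tridiagonal Toeplitz matrices with diagonal D and off-diagonals E, E†, and F(θ) := E e^{−iθ} + D + E† e^{iθ}. Then for a real number t: the smallest eigenvalue of T_N is ≥ t for all N ≥ 1 if and only if the smallest eigenvalue of the Hermitian matrix F(θ) is ≥ t for all θ ∈ [0,2π]. -/
open Matrix

/-- The symbol `F(θ) = E e^{−iθ} + D + Eᴴ e^{iθ}` of the Toeplitz matrices. -/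
noncomputable def symbolF {d : ℕ} (D E : Matrix (Fin d) (Fin d) ℂ) (θ : ℝ) :
    Matrix (Fin d) (Fin d) ℂ :=
  Complex.exp (-(θ : ℂ) * Complex.I) • E + D + Complex.exp ((θ : ℂ) * Complex.I) • Eᴴ


section Aux
open Complex intervalIntegral


lemma key_integral (k : ℤ) :
    ∫ θ in (0:ℝ)..(2*Real.pi), Complex.exp (k * θ * Complex.I)
      = if k = 0 then (2*Real.pi : ℂ) else 0 := by
  rcases eq_or_ne k 0 with hk | hk
  · simp [hk]
  · have hc : (k : ℂ) * Complex.I ≠ 0 := by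
      simp [Complex.I_ne_zero, Int.cast_injective.ne_iff, hk]
    have : ∫ θ in (0:ℝ)..(2*Real.pi), Complex.exp ((k * Complex.I) * θ)
        = (Complex.exp ((k*Complex.I) * ((2*Real.pi : ℝ) : ℂ)) - Complex.exp ((k*Complex.I)*((0:ℝ):ℂ))) / (k*Complex.I) :=
      integral_exp_mul_complex hc
    have h2 : Complex.exp ((k*Complex.I) * ((2*Real.pi : ℝ):ℂ)) = 1 := by
      rw [show ((k:ℂ)*Complex.I) * ((2*Real.pi:ℝ):ℂ) = k * (2*Real.pi*Complex.I) by push_cast; ring]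
      exact Complex.exp_int_mul_two_pi_mul_I k
    simp only [Complex.ofReal_zero, mul_zero, Complex.exp_zero, h2, sub_self, zero_div] at this
    rw [if_neg hk, ← this]
    congr 1; ext θ; ring_nf


lemma symbolF_apply {d : ℕ} (D E : Matrix (Fin d) (Fin d) ℂ) (θ : ℝ) (j k : Fin d) :
    symbolF D E θ j k = Complex.exp (-(θ:ℂ)*Complex.I) * E j k + D j k
      + Complex.exp ((θ:ℂ)*Complex.I) * Eᴴ j k := by
  simp [symbolF, Matrix.add_apply, Matrix.smul_apply, smul_eq_mul]

lemma cont_exp_mul (b c : ℂ) : Continuous fun θ:ℝ => Complex.exp (b * θ * Complex.I) * c := by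
  fun_prop

lemma ii_exp_mul (b c : ℂ) :
    IntervalIntegrable (fun θ:ℝ => Complex.exp (b * θ * Complex.I) * c)
      MeasureTheory.volume 0 (2*Real.pi) :=
  (cont_exp_mul b c).intervalIntegrable _ _

lemma integral_exp_mul_symbol {d : ℕ} (D E : Matrix (Fin d) (Fin d) ℂ) (a : ℤ) (j k : Fin d) :
    ∫ θ in (0:ℝ)..(2*Real.pi), Complex.exp (a * θ * Complex.I) * symbolF D E θ j k
      = (2*Real.pi:ℂ) * (if a = 1 then E j k else if a = 0 then D j k
          else if a = -1 then Eᴴ j k else 0) := by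
  have h1 : ∀ θ:ℝ, Complex.exp (a * θ * Complex.I) * symbolF D E θ j k
      = Complex.exp (((a-1:ℤ):ℂ) * θ * Complex.I) * E j k
        + Complex.exp ((a:ℂ) * θ * Complex.I) * D j k
        + Complex.exp (((a+1:ℤ):ℂ) * θ * Complex.I) * Eᴴ j k := by
    intro θ
    rw [symbolF_apply]; push_cast
    rw [show ((a:ℂ)-1)*θ*Complex.I = a*θ*Complex.I + (-(θ:ℂ)*Complex.I) by ring,
        show ((a:ℂ)+1)*θ*Complex.I = a*θ*Complex.I + ((θ:ℂ)*Complex.I) by ring,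
        Complex.exp_add, Complex.exp_add]
    ring
  simp only [h1]
  rw [intervalIntegral.integral_add (((ii_exp_mul _ _).add (ii_exp_mul _ _))) (ii_exp_mul _ _),
      intervalIntegral.integral_add (ii_exp_mul _ _) (ii_exp_mul _ _),
      intervalIntegral.integral_mul_const, intervalIntegral.integral_mul_const,
      intervalIntegral.integral_mul_const]
  rw [key_integral, show ((a:ℂ)) = ((a:ℤ):ℂ) by push_cast; ring, key_integral, key_integral]
  split_ifs <;> simp_all <;> ring_nf <;> omega


noncomputable def zh {d N : ℕ} (z : Fin N × Fin d → ℂ) (θ : ℝ) (j : Fin d) : ℂ :=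
  ∑ m : Fin N, Complex.exp (-((m:ℕ):ℂ) * θ * Complex.I) * z (m, j)

lemma quad_expand {d N : ℕ} (M : Matrix (Fin d) (Fin d) ℂ) (z : Fin N × Fin d → ℂ) (θ : ℝ) :
    star (zh z θ) ⬝ᵥ M.mulVec (zh z θ)
      = ∑ j : Fin d, ∑ k : Fin d, ∑ m : Fin N, ∑ n : Fin N,
          (starRingEnd ℂ) (z (m,j)) * z (n,k)
            * (Complex.exp ((((((m:ℕ):ℤ) - ((n:ℕ):ℤ)):ℤ):ℂ) * θ * Complex.I) * M j k) := by
  simp only [dotProduct, mulVec, Pi.star_apply, RCLike.star_def]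
  refine Finset.sum_congr rfl fun j _ => ?_
  rw [Finset.mul_sum]
  refine Finset.sum_congr rfl fun k _ => ?_
  simp only [zh, map_sum, _root_.map_mul]
  rw [Finset.sum_mul]
  refine Finset.sum_congr rfl fun m _ => ?_
  rw [Finset.mul_sum, Finset.mul_sum]
  refine Finset.sum_congr rfl fun n _ => ?_
  have hc : (starRingEnd ℂ) (Complex.exp (-((m:ℕ):ℂ) * θ * Complex.I))
      = Complex.exp (((m:ℕ):ℂ) * θ * Complex.I) := by
    rw [← Complex.exp_conj]
    congr 1
    simp [_root_.map_mul, Complex.conj_I, Complex.conj_ofReal]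
  rw [hc, show ((((((m:ℕ):ℤ) - ((n:ℕ):ℤ)):ℤ):ℂ)) * θ * Complex.I
      = ((m:ℕ):ℂ)*θ*Complex.I + (-((n:ℕ):ℂ)*θ*Complex.I) by push_cast; ring,
    Complex.exp_add]
  ring

lemma integral_sum4 {ι₁ ι₂ ι₃ ι₄ : Type*} [Fintype ι₁] [Fintype ι₂] [Fintype ι₃] [Fintype ι₄]
    (f : ι₁ → ι₂ → ι₃ → ι₄ → ℝ → ℂ) (hf : ∀ a b c e, Continuous (f a b c e)) :
    ∫ θ in (0:ℝ)..(2*Real.pi), ∑ a, ∑ b, ∑ c, ∑ e, f a b c e θ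
      = ∑ a, ∑ b, ∑ c, ∑ e, ∫ θ in (0:ℝ)..(2*Real.pi), f a b c e θ := by
  have c3 : ∀ a b c, Continuous fun θ => ∑ e, f a b c e θ :=
    fun a b c => continuous_finset_sum _ fun e _ => hf a b c e
  have c2 : ∀ a b, Continuous fun θ => ∑ c, ∑ e, f a b c e θ :=
    fun a b => continuous_finset_sum _ fun c _ => c3 a b c
  have c1 : ∀ a, Continuous fun θ => ∑ b, ∑ c, ∑ e, f a b c e θ :=
    fun a => continuous_finset_sum _ fun b _ => c2 a b
  rw [intervalIntegral.integral_finset_sum (fun a _ => ((c1 a).intervalIntegrable _ _))]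
  refine Finset.sum_congr rfl fun a _ => ?_
  rw [intervalIntegral.integral_finset_sum (fun b _ => ((c2 a b).intervalIntegrable _ _))]
  refine Finset.sum_congr rfl fun b _ => ?_
  rw [intervalIntegral.integral_finset_sum (fun c _ => ((c3 a b c).intervalIntegrable _ _))]
  refine Finset.sum_congr rfl fun c _ => ?_
  rw [intervalIntegral.integral_finset_sum (fun e _ => ((hf a b c e).intervalIntegrable _ _))]

lemma band_eq {d N : ℕ} (D E : Matrix (Fin d) (Fin d) ℂ) (m n : Fin N) (j k : Fin d) :
    (if ((m:ℕ):ℤ) - ((n:ℕ):ℤ) = 1 then E j k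
      else if ((m:ℕ):ℤ) - ((n:ℕ):ℤ) = 0 then D j k
      else if ((m:ℕ):ℤ) - ((n:ℕ):ℤ) = -1 then Eᴴ j k else 0)
      = bulkMatrix N D E (m,j) (n,k) := by
  simp only [bulkMatrix]
  split_ifs <;> first | rfl | omega

lemma sum_reorder {α : Type*} [AddCommMonoid α] {d N : ℕ} (f : Fin N → Fin d → Fin N → Fin d → α) :
    ∑ j : Fin d, ∑ k : Fin d, ∑ m : Fin N, ∑ n : Fin N, f m j n k
      = ∑ m : Fin N, ∑ j : Fin d, ∑ n : Fin N, ∑ k : Fin d, f m j n k :=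
  calc ∑ j : Fin d, ∑ k : Fin d, ∑ m : Fin N, ∑ n : Fin N, f m j n k
      = ∑ j : Fin d, ∑ m : Fin N, ∑ k : Fin d, ∑ n : Fin N, f m j n k :=
        Finset.sum_congr rfl fun j _ => Finset.sum_comm
    _ = ∑ m : Fin N, ∑ j : Fin d, ∑ k : Fin d, ∑ n : Fin N, f m j n k := Finset.sum_comm
    _ = ∑ m : Fin N, ∑ j : Fin d, ∑ n : Fin N, ∑ k : Fin d, f m j n k :=
        Finset.sum_congr rfl fun m _ => Finset.sum_congr rfl fun j _ => Finset.sum_comm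

lemma claimA {d N : ℕ} (D E : Matrix (Fin d) (Fin d) ℂ) (z : Fin N × Fin d → ℂ) :
    ∫ θ in (0:ℝ)..(2*Real.pi), star (zh z θ) ⬝ᵥ (symbolF D E θ).mulVec (zh z θ)
      = (2*Real.pi:ℂ) * (star z ⬝ᵥ (bulkMatrix N D E).mulVec z) := by
  simp only [quad_expand]
  rw [integral_sum4 _ (fun j k m n => by
    simp only [symbolF_apply]; fun_prop)]
  have hat : ∀ (j k : Fin d) (m n : Fin N),
      (∫ θ in (0:ℝ)..(2*Real.pi), (starRingEnd ℂ) (z (m,j)) * z (n,k)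
        * (Complex.exp ((((((m:ℕ):ℤ) - ((n:ℕ):ℤ)):ℤ):ℂ) * θ * Complex.I) * symbolF D E θ j k))
      = (starRingEnd ℂ) (z (m,j)) * z (n,k) * ((2*Real.pi:ℂ) * bulkMatrix N D E (m,j) (n,k)) := by
    intro j k m n
    rw [intervalIntegral.integral_const_mul, integral_exp_mul_symbol, band_eq]
  simp only [hat]
  rw [sum_reorder]
  simp only [dotProduct, mulVec, Fintype.sum_prod_type, Pi.star_apply, RCLike.star_def,
    Finset.mul_sum]
  refine Finset.sum_congr rfl fun m _ => Finset.sum_congr rfl fun j _ =>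
    Finset.sum_congr rfl fun n _ => Finset.sum_congr rfl fun k _ => ?_
  ring

lemma bulkMatrix_one {d N : ℕ} : bulkMatrix N (1 : Matrix (Fin d) (Fin d) ℂ) 0 = 1 := by
  ext ⟨m,j⟩ ⟨n,k⟩
  simp only [bulkMatrix, Matrix.conjTranspose_zero, Matrix.zero_apply, Matrix.one_apply,
    Prod.mk.injEq]
  by_cases h : m = n
  · subst h; simp [Matrix.one_apply]
  · have h' : ¬((m:ℕ)=(n:ℕ)) := fun hh => h (Fin.ext hh)
    simp only [h', if_false, if_neg (show ¬(m = n ∧ j = k) from fun hh => h hh.1)]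
    split_ifs <;> rfl

lemma claimB {d N : ℕ} (z : Fin N × Fin d → ℂ) :
    ∫ θ in (0:ℝ)..(2*Real.pi), star (zh z θ) ⬝ᵥ (zh z θ)
      = (2*Real.pi:ℂ) * (star z ⬝ᵥ z) := by
  have h := claimA (1 : Matrix (Fin d) (Fin d) ℂ) 0 z
  simpa [symbolF, Matrix.conjTranspose_zero, bulkMatrix_one, Matrix.one_mulVec] using h

lemma cont_quad {d N : ℕ} (D E : Matrix (Fin d) (Fin d) ℂ) (z : Fin N × Fin d → ℂ) :
    Continuous fun θ:ℝ => star (zh z θ) ⬝ᵥ (symbolF D E θ).mulVec (zh z θ) := by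
  simp only [quad_expand]
  refine continuous_finset_sum _ fun j _ => continuous_finset_sum _ fun k _ =>
    continuous_finset_sum _ fun m _ => continuous_finset_sum _ fun n _ => ?_
  simp only [symbolF_apply]; fun_prop

lemma cont_norm {d N : ℕ} (z : Fin N × Fin d → ℂ) :
    Continuous fun θ:ℝ => star (zh z θ) ⬝ᵥ (zh z θ) := by
  have h := cont_quad (1 : Matrix (Fin d) (Fin d) ℂ) 0 z
  simpa [symbolF, Matrix.conjTranspose_zero, Matrix.one_mulVec] using h

lemma backward_dir {d N : ℕ} (D E : Matrix (Fin d) (Fin d) ℂ) (t : ℝ)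
    (hs : ∀ θ ∈ Set.Icc (0 : ℝ) (2 * Real.pi), ∀ v : Fin d → ℂ,
      t * (star v ⬝ᵥ v).re ≤ (star v ⬝ᵥ (symbolF D E θ).mulVec v).re)
    (z : Fin N × Fin d → ℂ) :
    t * (star z ⬝ᵥ z).re ≤ (star z ⬝ᵥ (bulkMatrix N D E).mulVec z).re := by
  have hπ : (0:ℝ) ≤ 2 * Real.pi := by positivity
  have hcf : Continuous fun θ:ℝ => t * (star (zh z θ) ⬝ᵥ (zh z θ)).re :=
    (continuous_const.mul (Complex.continuous_re.comp (cont_norm z)))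
  have hcg : Continuous fun θ:ℝ => (star (zh z θ) ⬝ᵥ (symbolF D E θ).mulVec (zh z θ)).re :=
    Complex.continuous_re.comp (cont_quad D E z)
  have hmono := intervalIntegral.integral_mono_on (μ := MeasureTheory.volume) hπ
    (hcf.intervalIntegrable 0 (2*Real.pi)) (hcg.intervalIntegrable 0 (2*Real.pi))
    (fun θ hθ => hs θ hθ (zh z θ))
  rw [intervalIntegral.integral_const_mul] at hmono
  have h1 : (∫ θ in (0:ℝ)..(2*Real.pi), (star (zh z θ) ⬝ᵥ (zh z θ)).re)
      = ((2*Real.pi:ℂ) * (star z ⬝ᵥ z)).re := by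
    rw [← claimB z]
    exact Complex.reCLM.intervalIntegral_comp_comm ((cont_norm z).intervalIntegrable _ _)
  have h2 : (∫ θ in (0:ℝ)..(2*Real.pi), (star (zh z θ) ⬝ᵥ (symbolF D E θ).mulVec (zh z θ)).re)
      = ((2*Real.pi:ℂ) * (star z ⬝ᵥ (bulkMatrix N D E).mulVec z)).re := by
    rw [← claimA D E z]
    exact Complex.reCLM.intervalIntegral_comp_comm ((cont_quad D E z).intervalIntegrable _ _)
  rw [h1, h2] at hmono
  have hre1 : ((2*Real.pi:ℂ) * (star z ⬝ᵥ z)).re = (2*Real.pi) * (star z ⬝ᵥ z).re := by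
    rw [show ((2*Real.pi:ℂ)) = ((2*Real.pi : ℝ) : ℂ) by push_cast; ring, Complex.re_ofReal_mul]
  have hre2 : ((2*Real.pi:ℂ) * (star z ⬝ᵥ (bulkMatrix N D E).mulVec z)).re
      = (2*Real.pi) * (star z ⬝ᵥ (bulkMatrix N D E).mulVec z).re := by
    rw [show ((2*Real.pi:ℂ)) = ((2*Real.pi : ℝ) : ℂ) by push_cast; ring, Complex.re_ofReal_mul]
  rw [hre1, hre2] at hmono
  have hπ' : (0:ℝ) < 2 * Real.pi := by positivity
  nlinarith [hmono]

lemma count_range (A B C : ℂ) (K : ℕ) :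
    ∑ m ∈ Finset.range (K+1), ∑ n ∈ Finset.range (K+1),
      (if m = n then A else if m = n+1 then B else if n = m+1 then C else 0)
      = ((K+1 : ℕ):ℂ)*A + ((K:ℕ):ℂ)*B + ((K:ℕ):ℂ)*C := by
  induction K with
  | zero => simp
  | succ K ih =>
    have h1 : ∀ m : ℕ, (∑ n ∈ Finset.range (K+1+1),
        (if m = n then A else if m = n+1 then B else if n = m+1 then C else 0))
        = (∑ n ∈ Finset.range (K+1),
            (if m = n then A else if m = n+1 then B else if n = m+1 then C else 0))
          + (if m = K+1 then A else if m = K+2 then B else if K+1 = m+1 then C else 0) :=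
      fun m => Finset.sum_range_succ _ _
    rw [Finset.sum_range_succ, Finset.sum_congr rfl (fun m _ => h1 m), Finset.sum_add_distrib, ih,
      h1 (K+1)]
    have hcol : (∑ m ∈ Finset.range (K+1),
        (if m = K+1 then A else if m = K+2 then B else if K+1 = m+1 then C else 0)) = C := by
      have hpt : ∀ m : ℕ, m < K+1 → ((if m = K+1 then A else if m = K+2 then B
          else if K+1 = m+1 then C else 0) = if m = K then C else 0) := by
        intro m hm; split_ifs <;> first | rfl | (exfalso; omega)
      rw [Finset.sum_congr rfl (fun m hm => hpt m (Finset.mem_range.mp hm)),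
        Finset.sum_ite_eq' (Finset.range (K+1)) K (fun _ => C)]
      simp
    have hrow : (∑ n ∈ Finset.range (K+1),
        (if K+1 = n then A else if K+1 = n+1 then B else if n = K+1+1 then C else 0)) = B := by
      have hpt : ∀ n : ℕ, n < K+1 → ((if K+1 = n then A else if K+1 = n+1 then B
          else if n = K+1+1 then C else 0) = if n = K then B else 0) := by
        intro n hn; split_ifs <;> first | rfl | (exfalso; omega)
      rw [Finset.sum_congr rfl (fun n hn => hpt n (Finset.mem_range.mp hn)),
        Finset.sum_ite_eq' (Finset.range (K+1)) K (fun _ => B)]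
      simp
    rw [hcol, hrow, if_pos rfl]
    push_cast
    ring

lemma conj_exp_nat (m : ℕ) (θ : ℝ) :
    (starRingEnd ℂ) (Complex.exp (((m:ℕ):ℂ)*θ*Complex.I))
      = Complex.exp (-((m:ℕ):ℂ)*θ*Complex.I) := by
  rw [← Complex.exp_conj]
  congr 1
  simp [_root_.map_mul, Complex.conj_I, Complex.conj_ofReal]

noncomputable def zz {d K : ℕ} (θ : ℝ) (v : Fin d → ℂ) : Fin (K+1) × Fin d → ℂ :=
  fun p => Complex.exp (((p.1:ℕ):ℂ)*θ*Complex.I) * v p.2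

lemma quadNorm {d K : ℕ} (θ : ℝ) (v : Fin d → ℂ) :
    star (zz (K := K) θ v) ⬝ᵥ (zz θ v) = ((K+1:ℕ):ℂ) * (star v ⬝ᵥ v) := by
  simp only [dotProduct, zz, Fintype.sum_prod_type, Pi.star_apply, RCLike.star_def]
  have hpt : ∀ (m : Fin (K+1)) (j : Fin d),
      (starRingEnd ℂ) (Complex.exp (((m:ℕ):ℂ)*θ*Complex.I) * v j)
        * (Complex.exp (((m:ℕ):ℂ)*θ*Complex.I) * v j)
      = (starRingEnd ℂ) (v j) * v j := by
    intro m j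
    rw [_root_.map_mul, conj_exp_nat]
    have he : Complex.exp (-((m:ℕ):ℂ)*θ*Complex.I) * Complex.exp (((m:ℕ):ℂ)*θ*Complex.I)
        = 1 := by
      rw [← Complex.exp_add,
        show -((m:ℕ):ℂ)*θ*Complex.I + ((m:ℕ):ℂ)*θ*Complex.I = 0 by ring, Complex.exp_zero]
    calc _ = (Complex.exp (-((m:ℕ):ℂ)*θ*Complex.I) * Complex.exp (((m:ℕ):ℂ)*θ*Complex.I))
            * ((starRingEnd ℂ) (v j) * v j) := by ring
      _ = _ := by rw [he, one_mul]
  simp only [hpt]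
  rw [Finset.sum_const, Finset.card_univ]
  simp [nsmul_eq_mul, dotProduct, RCLike.star_def]

lemma quadBulk {d K : ℕ} (D E : Matrix (Fin d) (Fin d) ℂ) (θ : ℝ) (v : Fin d → ℂ) :
    star (zz (K := K) θ v) ⬝ᵥ (bulkMatrix (K+1) D E).mulVec (zz θ v)
      = ((K+1:ℕ):ℂ) * (star v ⬝ᵥ D.mulVec v)
        + ((K:ℕ):ℂ) * (Complex.exp (-(θ:ℂ)*Complex.I) * (star v ⬝ᵥ E.mulVec v))
        + ((K:ℕ):ℂ) * (Complex.exp ((θ:ℂ)*Complex.I) * (star v ⬝ᵥ Eᴴ.mulVec v)) := by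
  have expand : star (zz (K := K) θ v) ⬝ᵥ (bulkMatrix (K+1) D E).mulVec (zz θ v)
      = ∑ m : Fin (K+1), ∑ n : Fin (K+1), ∑ j : Fin d, ∑ k : Fin d,
          (starRingEnd ℂ) (zz (K := K) θ v (m,j))
            * (bulkMatrix (K+1) D E (m,j) (n,k) * zz (K := K) θ v (n,k)) := by
    simp only [dotProduct, mulVec, Fintype.sum_prod_type, Pi.star_apply, RCLike.star_def,
      Finset.mul_sum]
    exact Finset.sum_congr rfl fun m _ => Finset.sum_comm
  have hband : ∀ m n : Fin (K+1), (∑ j : Fin d, ∑ k : Fin d,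
      (starRingEnd ℂ) (zz (K := K) θ v (m,j))
        * (bulkMatrix (K+1) D E (m,j) (n,k) * zz (K := K) θ v (n,k)))
      = (if (m:ℕ) = (n:ℕ) then star v ⬝ᵥ D.mulVec v
        else if (m:ℕ) = (n:ℕ)+1 then Complex.exp (-(θ:ℂ)*Complex.I) * (star v ⬝ᵥ E.mulVec v)
        else if (n:ℕ) = (m:ℕ)+1 then Complex.exp ((θ:ℂ)*Complex.I) * (star v ⬝ᵥ Eᴴ.mulVec v)
        else 0) := by
    intro m n
    simp only [bulkMatrix, zz]
    by_cases h1 : (m:ℕ) = (n:ℕ)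
    · simp only [if_pos h1]
      have hmn : ((n:ℕ):ℂ) = ((m:ℕ):ℂ) := by rw [h1]
      have he : Complex.exp (-((m:ℕ):ℂ)*θ*Complex.I) * Complex.exp (((n:ℕ):ℂ)*θ*Complex.I)
          = 1 := by
        rw [hmn, ← Complex.exp_add,
          show -((m:ℕ):ℂ)*θ*Complex.I + ((m:ℕ):ℂ)*θ*Complex.I = 0 by ring, Complex.exp_zero]
      rw [show star v ⬝ᵥ D.mulVec v = ∑ j, ∑ k, (starRingEnd ℂ) (v j) * (D j k * v k) by
        simp only [dotProduct, mulVec, Pi.star_apply, RCLike.star_def, Finset.mul_sum]]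
      refine Finset.sum_congr rfl fun j _ => Finset.sum_congr rfl fun k _ => ?_
      rw [_root_.map_mul, conj_exp_nat]
      calc _ = (Complex.exp (-((m:ℕ):ℂ)*θ*Complex.I) * Complex.exp (((n:ℕ):ℂ)*θ*Complex.I))
              * ((starRingEnd ℂ) (v j) * (D j k * v k)) := by ring
        _ = _ := by rw [he, one_mul]
    · by_cases h2 : (m:ℕ) = (n:ℕ)+1
      · simp only [if_neg h1, if_pos h2]
        have hmn : ((m:ℕ):ℂ) = ((n:ℕ):ℂ)+1 := by exact_mod_cast congrArg (Nat.cast (R := ℂ)) h2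
        have he : Complex.exp (-((m:ℕ):ℂ)*θ*Complex.I) * Complex.exp (((n:ℕ):ℂ)*θ*Complex.I)
            = Complex.exp (-(θ:ℂ)*Complex.I) := by
          rw [← Complex.exp_add]; congr 1; rw [hmn]; ring
        rw [show Complex.exp (-(θ:ℂ)*Complex.I) * (star v ⬝ᵥ E.mulVec v)
            = ∑ j, ∑ k, Complex.exp (-(θ:ℂ)*Complex.I) * ((starRingEnd ℂ) (v j) * (E j k * v k)) by
          simp only [dotProduct, mulVec, Pi.star_apply, RCLike.star_def, Finset.mul_sum]]
        refine Finset.sum_congr rfl fun j _ => Finset.sum_congr rfl fun k _ => ?_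
        rw [_root_.map_mul, conj_exp_nat]
        calc _ = (Complex.exp (-((m:ℕ):ℂ)*θ*Complex.I) * Complex.exp (((n:ℕ):ℂ)*θ*Complex.I))
                * ((starRingEnd ℂ) (v j) * (E j k * v k)) := by ring
          _ = _ := by rw [he]
      · by_cases h3 : (n:ℕ) = (m:ℕ)+1
        · simp only [if_neg h1, if_neg h2, if_pos h3]
          have hmn : ((n:ℕ):ℂ) = ((m:ℕ):ℂ)+1 := by exact_mod_cast congrArg (Nat.cast (R := ℂ)) h3
          have he : Complex.exp (-((m:ℕ):ℂ)*θ*Complex.I) * Complex.exp (((n:ℕ):ℂ)*θ*Complex.I)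
              = Complex.exp ((θ:ℂ)*Complex.I) := by
            rw [← Complex.exp_add]; congr 1; rw [hmn]; ring
          rw [show Complex.exp ((θ:ℂ)*Complex.I) * (star v ⬝ᵥ Eᴴ.mulVec v)
              = ∑ j, ∑ k, Complex.exp ((θ:ℂ)*Complex.I) * ((starRingEnd ℂ) (v j) * (Eᴴ j k * v k)) by
            simp only [dotProduct, mulVec, Pi.star_apply, RCLike.star_def, Finset.mul_sum]]
          refine Finset.sum_congr rfl fun j _ => Finset.sum_congr rfl fun k _ => ?_
          rw [_root_.map_mul, conj_exp_nat]
          calc _ = (Complex.exp (-((m:ℕ):ℂ)*θ*Complex.I) * Complex.exp (((n:ℕ):ℂ)*θ*Complex.I))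
                  * ((starRingEnd ℂ) (v j) * (Eᴴ j k * v k)) := by ring
            _ = _ := by rw [he]
        · simp [if_neg h1, if_neg h2, if_neg h3]
  rw [expand, Finset.sum_congr rfl (fun m _ => Finset.sum_congr rfl (fun n _ => hband m n))]
  have h4 : ∀ m : Fin (K+1), (∑ n : Fin (K+1),
      (if (m:ℕ) = (n:ℕ) then star v ⬝ᵥ D.mulVec v
        else if (m:ℕ) = (n:ℕ)+1 then Complex.exp (-(θ:ℂ)*Complex.I) * (star v ⬝ᵥ E.mulVec v)
        else if (n:ℕ) = (m:ℕ)+1 then Complex.exp ((θ:ℂ)*Complex.I) * (star v ⬝ᵥ Eᴴ.mulVec v)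
        else 0))
      = ∑ n ∈ Finset.range (K+1),
        (if (m:ℕ) = n then star v ⬝ᵥ D.mulVec v
          else if (m:ℕ) = n+1 then Complex.exp (-(θ:ℂ)*Complex.I) * (star v ⬝ᵥ E.mulVec v)
          else if n = (m:ℕ)+1 then Complex.exp ((θ:ℂ)*Complex.I) * (star v ⬝ᵥ Eᴴ.mulVec v)
          else 0) :=
    fun m => Fin.sum_univ_eq_sum_range (fun nv =>
      (if (m:ℕ) = nv then star v ⬝ᵥ D.mulVec v
        else if (m:ℕ) = nv+1 then Complex.exp (-(θ:ℂ)*Complex.I) * (star v ⬝ᵥ E.mulVec v)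
        else if nv = (m:ℕ)+1 then Complex.exp ((θ:ℂ)*Complex.I) * (star v ⬝ᵥ Eᴴ.mulVec v)
        else 0)) (K+1)
  rw [Finset.sum_congr rfl (fun m _ => h4 m),
    Fin.sum_univ_eq_sum_range (fun mv => ∑ n ∈ Finset.range (K+1),
      (if mv = n then star v ⬝ᵥ D.mulVec v
        else if mv = n+1 then Complex.exp (-(θ:ℂ)*Complex.I) * (star v ⬝ᵥ E.mulVec v)
        else if n = mv+1 then Complex.exp ((θ:ℂ)*Complex.I) * (star v ⬝ᵥ Eᴴ.mulVec v)
        else 0)) (K+1)]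
  exact count_range _ _ _ K

lemma symb_quad {d : ℕ} (D E : Matrix (Fin d) (Fin d) ℂ) (θ : ℝ) (v : Fin d → ℂ) :
    star v ⬝ᵥ (symbolF D E θ).mulVec v
      = Complex.exp (-(θ:ℂ)*Complex.I) * (star v ⬝ᵥ E.mulVec v) + star v ⬝ᵥ D.mulVec v
        + Complex.exp ((θ:ℂ)*Complex.I) * (star v ⬝ᵥ Eᴴ.mulVec v) := by
  simp [symbolF, Matrix.add_mulVec, Matrix.smul_mulVec, dotProduct_add, dotProduct_smul,
    smul_eq_mul]


end Aux

/-- the smallest eigenvalue of `T_N` is `≥ t` for all `N ≥ 1` iff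
the smallest eigenvalue of the symbol `F(θ)` is `≥ t` for all `θ ∈ [0,2π]`. -/
theorem bulk_rayleigh_bound_iff_symbol_bound {d : ℕ}
    (D E : Matrix (Fin d) (Fin d) ℂ) (hD : D.IsHermitian) (t : ℝ) :
    (∀ N : ℕ, 1 ≤ N → ∀ z : Fin N × Fin d → ℂ,
      t * (star z ⬝ᵥ z).re ≤ (star z ⬝ᵥ (bulkMatrix N D E).mulVec z).re) ↔
    (∀ θ ∈ Set.Icc (0 : ℝ) (2 * Real.pi), ∀ z : Fin d → ℂ,
      t * (star z ⬝ᵥ z).re ≤ (star z ⬝ᵥ (symbolF D E θ).mulVec z).re) := by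
  constructor
  · intro h θ _ v
    set a : ℝ := (star v ⬝ᵥ v).re with ha
    set b : ℝ := (star v ⬝ᵥ (symbolF D E θ).mulVec v).re with hbdef
    set c : ℝ := (star v ⬝ᵥ D.mulVec v).re with hc
    set e : ℝ := (Complex.exp (-(θ:ℂ)*Complex.I) * (star v ⬝ᵥ E.mulVec v)).re with he
    set f : ℝ := (Complex.exp ((θ:ℂ)*Complex.I) * (star v ⬝ᵥ Eᴴ.mulVec v)).re with hf
    have hb : b = e + c + f := by
      rw [hbdef, symb_quad]
      simp only [Complex.add_re]
      rfl
    have key : ∀ K : ℕ, t * (((K:ℝ)+1) * a) ≤ ((K:ℝ)+1)*c + (K:ℝ)*e + (K:ℝ)*f := by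
      intro K
      have hh := h (K+1) (by omega) (zz θ v)
      rw [quadNorm, quadBulk] at hh
      have e1 : (((K+1:ℕ):ℂ) * (star v ⬝ᵥ v)).re = ((K:ℝ)+1) * a := by
        rw [show ((K+1:ℕ):ℂ) = (((K+1:ℕ):ℝ):ℂ) by push_cast; ring, Complex.re_ofReal_mul]
        push_cast; ring
      have e2 : (((K+1:ℕ):ℂ) * (star v ⬝ᵥ D.mulVec v)
          + ((K:ℕ):ℂ) * (Complex.exp (-(θ:ℂ)*Complex.I) * (star v ⬝ᵥ E.mulVec v))
          + ((K:ℕ):ℂ) * (Complex.exp ((θ:ℂ)*Complex.I) * (star v ⬝ᵥ Eᴴ.mulVec v))).re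
          = ((K:ℝ)+1)*c + (K:ℝ)*e + (K:ℝ)*f := by
        simp only [Complex.add_re, ← Complex.ofReal_natCast, Complex.re_ofReal_mul]
        push_cast [hc, he, hf]; ring
      rw [e1, e2] at hh
      exact hh
    by_contra hlt
    push_neg at hlt
    have hpos : 0 < t*a - b := by linarith
    obtain ⟨K, hK⟩ := exists_nat_gt ((c - t*a)/(t*a - b))
    rw [div_lt_iff₀ hpos] at hK
    have hk := key K
    nlinarith [hk, hK, hb]
  · intro hs N _ z
    exact backward_dir D E t hs z
end

section
/- Let S ∈ ℝ^{d×d} have spectral radius ρ(S) < 1, and let Σₒ ∈ ℝ^{d×d} be symmetric positive definite. For N ≥ 1 let Σ_N⁻¹ be the symmetric block tridiagonal matrix with diagonal blocks Σₒ⁻¹ + SᵀS, I + SᵀS (repeated N times), I, and off-diagonal blocks −S, −Sᵀ. Then there exists σ > 0 (independent of N) such that the smallest eigenvalue of Σ_N⁻¹ is at least σ for all N ≥ 1; one may take σ = min(1, λ_min(Σₒ⁻¹))·(1−s)²/c², where ‖Sⁿ‖ ≤ c sⁿ for all n ≥ 0 with some s ∈ (0,1) and c > 0. -/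
open Matrix

/-- The block tridiagonal precision matrix `Σ_N⁻¹` of `(X₁,…,X_{N+2})` for the
Gauss–Markov chain with drift `S` and initial precision `SoInv = Σₒ⁻¹`:
diagonal blocks `Σₒ⁻¹ + SᵀS, I + SᵀS, …, I + SᵀS, I`, off-diagonal blocks
`−S`, `−Sᵀ`. -/
def precisionMatrix {d : ℕ} (N : ℕ) (S SoInv : Matrix (Fin d) (Fin d) ℝ) :
    Matrix (Fin (N + 2) × Fin d) (Fin (N + 2) × Fin d) ℝ :=
  fun p q =>
    if (p.1 : ℕ) = (q.1 : ℕ) then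
      (if (p.1 : ℕ) = 0 then SoInv + Sᵀ * S
       else if (p.1 : ℕ) = N + 1 then 1
       else 1 + Sᵀ * S) p.2 q.2
    else if (p.1 : ℕ) = (q.1 : ℕ) + 1 then (-S) p.2 q.2
    else if (q.1 : ℕ) = (p.1 : ℕ) + 1 then (-Sᵀ) p.2 q.2
    else 0

namespace PMAux
open Finset
variable {d : ℕ}

noncomputable def E : (Fin d → ℝ) →ₗ[ℝ] EuclideanSpace ℝ (Fin d) :=
  (WithLp.linearEquiv 2 ℝ (Fin d → ℝ)).symm.toLinearMap

noncomputable def nr (v : Fin d → ℝ) : ℝ := ‖E v‖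

lemma nr_nonneg (v : Fin d → ℝ) : 0 ≤ nr v := norm_nonneg _

lemma dot_self_eq_nr_sq (v : Fin d → ℝ) : v ⬝ᵥ v = nr v ^ 2 := by
  rw [nr, ← real_inner_self_eq_norm_sq]
  simp [E, PiLp.inner_apply, dotProduct, RCLike.inner_apply, WithLp.linearEquiv,
    mul_comm]
  rw [EuclideanSpace.norm_eq, Real.sq_sqrt (by positivity)]
  simp [sq]

lemma nr_mulVec_le (A : Matrix (Fin d) (Fin d) ℝ) (v : Fin d → ℝ) :
    nr (A *ᵥ v) ≤ ‖Matrix.toEuclideanCLM (𝕜 := ℝ) A‖ * nr v := by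
  have h := (Matrix.toEuclideanCLM (𝕜 := ℝ) A).le_opNorm (E v)
  have h2 : (Matrix.toEuclideanCLM (𝕜 := ℝ) A) (E v) = E (A *ᵥ v) := by
    simp [E, WithLp.linearEquiv,
      Matrix.toLin'_apply]
  rw [h2] at h
  exact h

def Blk (N : ℕ) (S SoInv : Matrix (Fin d) (Fin d) ℝ) (a b : ℕ) :
    Matrix (Fin d) (Fin d) ℝ :=
  if a = b then
    (if a = 0 then SoInv + Sᵀ * S else if a = N + 1 then 1 else 1 + Sᵀ * S)
  else if a = b + 1 then -S
  else if b = a + 1 then -Sᵀ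
  else 0

lemma pm_entry (N : ℕ) (S SoInv : Matrix (Fin d) (Fin d) ℝ)
    (p q : Fin (N + 2) × Fin d) :
    precisionMatrix N S SoInv p q = Blk N S SoInv p.1 q.1 p.2 q.2 := by
  unfold precisionMatrix Blk
  split_ifs <;> rfl

def Zv (N : ℕ) (z : Fin (N + 2) × Fin d → ℝ) (a : ℕ) : Fin d → ℝ :=
  fun i => if h : a < N + 2 then z (⟨a, h⟩, i) else 0

lemma Zv_coe (N : ℕ) (z : Fin (N + 2) × Fin d → ℝ) (m : Fin (N + 2)) :
    Zv N z (m : ℕ) = fun i => z (m, i) := by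
  funext i
  simp [Zv, m.isLt]

def Wv (N : ℕ) (S : Matrix (Fin d) (Fin d) ℝ) (z : Fin (N + 2) × Fin d → ℝ) :
    ℕ → Fin d → ℝ
  | 0 => Zv N z 0
  | (n + 1) => Zv N z (n + 1) - S *ᵥ Zv N z n

lemma quad_form_eq (N : ℕ) (S SoInv : Matrix (Fin d) (Fin d) ℝ)
    (z : Fin (N + 2) × Fin d → ℝ) :
    z ⬝ᵥ (precisionMatrix N S SoInv) *ᵥ z =
      Zv N z 0 ⬝ᵥ SoInv *ᵥ Zv N z 0 +
        ∑ a ∈ range (N + 1), Wv N S z (a + 1) ⬝ᵥ Wv N S z (a + 1) := by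
  set Z := Zv N z with hZ
  -- step 1: block double sum
  have h1 : z ⬝ᵥ (precisionMatrix N S SoInv) *ᵥ z =
      ∑ a ∈ range (N + 2), ∑ b ∈ range (N + 2), Z a ⬝ᵥ (Blk N S SoInv a b) *ᵥ Z b := by
    have e1 : z ⬝ᵥ (precisionMatrix N S SoInv) *ᵥ z =
        ∑ m : Fin (N + 2), ∑ n : Fin (N + 2),
          Z (m : ℕ) ⬝ᵥ (Blk N S SoInv (m : ℕ) (n : ℕ)) *ᵥ Z (n : ℕ) := by
      simp only [dotProduct, mulVec, pm_entry]
      rw [Fintype.sum_prod_type]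
      refine Finset.sum_congr rfl fun m _ => ?_
      have : ∀ i : Fin d,
          z (m, i) * ∑ q : Fin (N + 2) × Fin d, Blk N S SoInv (m : ℕ) (q.1 : ℕ) i q.2 * z q
          = ∑ n : Fin (N + 2), ∑ j : Fin d,
              z (m, i) * (Blk N S SoInv (m : ℕ) (n : ℕ) i j * z (n, j)) := by
        intro i
        rw [Fintype.sum_prod_type, Finset.mul_sum]
        exact Finset.sum_congr rfl fun n _ => Finset.mul_sum _ _ _
      simp only [this]
      rw [Finset.sum_comm]
      refine Finset.sum_congr rfl fun n _ => ?_
      simp only [dotProduct, mulVec, Zv_coe, hZ, Finset.mul_sum]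
    rw [e1]
    rw [Fin.sum_univ_eq_sum_range (fun a => ∑ n : Fin (N + 2),
        Z a ⬝ᵥ (Blk N S SoInv a (n : ℕ)) *ᵥ Z (n : ℕ))]
    exact Finset.sum_congr rfl fun a _ =>
      Fin.sum_univ_eq_sum_range (fun b => Z a ⬝ᵥ (Blk N S SoInv a b) *ᵥ Z b) (N + 2)
  -- step 2: decompose each block entry
  have h2 : ∀ a b : ℕ, Z a ⬝ᵥ (Blk N S SoInv a b) *ᵥ Z b =
      (if a = b then Z a ⬝ᵥ (if a = 0 then SoInv + Sᵀ * S else if a = N + 1 then 1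
        else 1 + Sᵀ * S) *ᵥ Z a else 0)
      + (if a = b + 1 then Z (b + 1) ⬝ᵥ (-S) *ᵥ Z b else 0)
      + (if b = a + 1 then Z a ⬝ᵥ (-Sᵀ) *ᵥ Z (a + 1) else 0) := by
    intro a b
    unfold Blk
    by_cases hab : a = b
    · subst hab
      simp [show ¬ a = a + 1 by omega]
    · by_cases hab2 : a = b + 1
      · subst hab2
        simp [hab, show ¬ b = b + 1 + 1 by omega]
      · by_cases hab3 : b = a + 1
        · subst hab3
          simp [hab, hab2]
        · simp [hab, hab2, hab3]
  simp only [h2, Finset.sum_add_distrib] at h1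
  -- step 3: evaluate the three double sums
  have hdiag : ∑ a ∈ range (N + 2), ∑ b ∈ range (N + 2),
      (if a = b then Z a ⬝ᵥ (if a = 0 then SoInv + Sᵀ * S else if a = N + 1 then 1
        else 1 + Sᵀ * S) *ᵥ Z a else 0)
      = ∑ a ∈ range (N + 2), Z a ⬝ᵥ (if a = 0 then SoInv + Sᵀ * S
          else if a = N + 1 then 1 else 1 + Sᵀ * S) *ᵥ Z a := by
    refine Finset.sum_congr rfl fun a ha => ?_
    rw [Finset.sum_ite_eq (range (N + 2)) a, if_pos ha]
  have hsub : ∑ a ∈ range (N + 2), ∑ b ∈ range (N + 2),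
      (if a = b + 1 then Z (b + 1) ⬝ᵥ (-S) *ᵥ Z b else 0)
      = ∑ b ∈ range (N + 1), Z (b + 1) ⬝ᵥ (-S) *ᵥ Z b := by
    rw [Finset.sum_comm]
    have : ∀ b ∈ range (N + 2), ∑ a ∈ range (N + 2),
        (if a = b + 1 then Z (b + 1) ⬝ᵥ (-S) *ᵥ Z b else 0)
        = if b + 1 ∈ range (N + 2) then Z (b + 1) ⬝ᵥ (-S) *ᵥ Z b else 0 := fun b _ =>
      Finset.sum_ite_eq' (range (N + 2)) (b + 1) _
    rw [Finset.sum_congr rfl this, Finset.sum_range_succ]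
    simp only [mem_range]
    rw [if_neg (by omega), add_zero]
    exact Finset.sum_congr rfl fun b hb => if_pos (by simp only [mem_range] at hb; omega)
  have hsup : ∑ a ∈ range (N + 2), ∑ b ∈ range (N + 2),
      (if b = a + 1 then Z a ⬝ᵥ (-Sᵀ) *ᵥ Z (a + 1) else 0)
      = ∑ a ∈ range (N + 1), Z a ⬝ᵥ (-Sᵀ) *ᵥ Z (a + 1) := by
    have : ∀ a ∈ range (N + 2), ∑ b ∈ range (N + 2),
        (if b = a + 1 then Z a ⬝ᵥ (-Sᵀ) *ᵥ Z (a + 1) else 0)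
        = if a + 1 ∈ range (N + 2) then Z a ⬝ᵥ (-Sᵀ) *ᵥ Z (a + 1) else 0 := fun a _ =>
      Finset.sum_ite_eq' (range (N + 2)) (a + 1) _
    rw [Finset.sum_congr rfl this, Finset.sum_range_succ]
    simp only [mem_range]
    rw [if_neg (by omega), add_zero]
    exact Finset.sum_congr rfl fun a ha => if_pos (by simp only [mem_range] at ha; omega)
  rw [hdiag, hsub, hsup] at h1
  -- step 4: split the diagonal
  have hdsplit : ∑ a ∈ range (N + 2), (Z a ⬝ᵥ (if a = 0 then SoInv + Sᵀ * S
        else if a = N + 1 then 1 else 1 + Sᵀ * S) *ᵥ Z a)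
      = Z 0 ⬝ᵥ SoInv *ᵥ Z 0 +
        ∑ a ∈ range (N + 1),
          (Z a ⬝ᵥ (Sᵀ * S) *ᵥ Z a + Z (a + 1) ⬝ᵥ Z (a + 1)) := by
    rw [Finset.sum_range_succ']
    rw [if_pos rfl, add_mulVec, dotProduct_add]
    rw [Finset.sum_range_succ]
    rw [if_neg (by omega), if_pos rfl, one_mulVec]
    have hmid : ∀ a ∈ range N,
        Z (a + 1) ⬝ᵥ (if a + 1 = 0 then SoInv + Sᵀ * S
          else if a + 1 = N + 1 then 1 else 1 + Sᵀ * S) *ᵥ Z (a + 1)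
        = Z (a + 1) ⬝ᵥ Z (a + 1) + Z (a + 1) ⬝ᵥ (Sᵀ * S) *ᵥ Z (a + 1) := by
      intro a ha
      simp only [mem_range] at ha
      rw [if_neg (by omega), if_neg (by omega), add_mulVec, one_mulVec, dotProduct_add]
    rw [Finset.sum_congr rfl hmid, Finset.sum_add_distrib, Finset.sum_add_distrib,
      Finset.sum_range_succ' (fun a => Z a ⬝ᵥ (Sᵀ * S) *ᵥ Z a) N,
      Finset.sum_range_succ (fun a => Z (a + 1) ⬝ᵥ Z (a + 1)) N]
    ring
  rw [hdsplit] at h1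
  rw [h1, add_assoc, add_assoc]
  -- step 5: per-term completion of the square
  have hper : ∀ a : ℕ,
      Z a ⬝ᵥ (Sᵀ * S) *ᵥ Z a + Z (a + 1) ⬝ᵥ Z (a + 1)
        + Z (a + 1) ⬝ᵥ (-S) *ᵥ Z a + Z a ⬝ᵥ (-Sᵀ) *ᵥ Z (a + 1)
      = Wv N S z (a + 1) ⬝ᵥ Wv N S z (a + 1) := by
    intro a
    show _ = (Z (a + 1) - S *ᵥ Z a) ⬝ᵥ (Z (a + 1) - S *ᵥ Z a)
    have hA : Z a ⬝ᵥ (Sᵀ * S) *ᵥ Z a = (S *ᵥ Z a) ⬝ᵥ (S *ᵥ Z a) := by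
      rw [← mulVec_mulVec, dotProduct_mulVec, vecMul_transpose]
    have hB : Z (a + 1) ⬝ᵥ (-S) *ᵥ Z a = -(Z (a + 1) ⬝ᵥ (S *ᵥ Z a)) := by
      rw [neg_mulVec, dotProduct_neg]
    have hC : Z a ⬝ᵥ (-Sᵀ) *ᵥ Z (a + 1) = -((S *ᵥ Z a) ⬝ᵥ Z (a + 1)) := by
      rw [neg_mulVec, dotProduct_neg, dotProduct_mulVec, vecMul_transpose]
    have hcomm : (S *ᵥ Z a) ⬝ᵥ Z (a + 1) = Z (a + 1) ⬝ᵥ (S *ᵥ Z a) :=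
      dotProduct_comm _ _
    rw [hA, hB, hC, sub_dotProduct, dotProduct_sub, dotProduct_sub, hcomm]
    ring
  congr 1
  rw [← Finset.sum_add_distrib, ← Finset.sum_add_distrib]
  refine Finset.sum_congr rfl fun a _ => ?_
  rw [← hper a]
  ring

lemma geo_le {s : ℝ} (hs0 : 0 < s) (hs1 : s < 1) (m : ℕ) :
    ∑ j ∈ range m, s ^ j ≤ 1 / (1 - s) := by
  rw [geom_sum_eq (by linarith) m]
  rw [show (s ^ m - 1) / (s - 1) = (1 - s ^ m) / (1 - s) by
    rw [div_eq_div_iff (by linarith) (by linarith)]; ring]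
  have h : 1 - s ^ m ≤ 1 := by have := pow_nonneg hs0.le m; linarith
  exact (div_le_div_iff_of_pos_right (by linarith)).mpr h

lemma sum_tri (m : ℕ) (f : ℕ → ℕ → ℝ) :
    ∑ n ∈ range m, ∑ k ∈ range (n + 1), f n k
      = ∑ k ∈ range m, ∑ n ∈ Ico k m, f n k := by
  induction m with
  | zero => simp
  | succ m ih =>
    have h1 : ∀ k ∈ range m, ∑ n ∈ Ico k (m + 1), f n k
        = ∑ n ∈ Ico k m, f n k + f m k := by
      intro k hk
      simp only [mem_range] at hk
      exact Finset.sum_Ico_succ_top (by omega) _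
    have hR : ∑ k ∈ range (m + 1), ∑ n ∈ Ico k (m + 1), f n k
        = ∑ k ∈ range m, (∑ n ∈ Ico k m, f n k + f m k) + f m m := by
      rw [Finset.sum_range_succ, Finset.sum_congr rfl h1]
      simp [Finset.sum_Ico_succ_top (le_refl m)]
    rw [Finset.sum_range_succ _ m, ih, hR, Finset.sum_add_distrib,
      Finset.sum_range_succ]
    ring

lemma cs_step {c s : ℝ} (hs0 : 0 < s) (n : ℕ) (w : ℕ → ℝ) :
    (∑ k ∈ range (n + 1), c * s ^ (n - k) * w k) ^ 2
      ≤ (∑ k ∈ range (n + 1), s ^ (n - k)) *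
        (∑ k ∈ range (n + 1), c ^ 2 * s ^ (n - k) * w k ^ 2) := by
  have hCS := Finset.sum_mul_sq_le_sq_mul_sq (range (n + 1))
    (fun k => Real.sqrt s ^ (n - k)) (fun k => c * Real.sqrt s ^ (n - k) * w k)
  have hss : ∀ m : ℕ, Real.sqrt s ^ m * Real.sqrt s ^ m = s ^ m := by
    intro m; rw [← mul_pow, Real.mul_self_sqrt hs0.le]
  have h1 : ∀ k, Real.sqrt s ^ (n - k) * (c * Real.sqrt s ^ (n - k) * w k)
      = c * s ^ (n - k) * w k := by
    intro k
    calc Real.sqrt s ^ (n - k) * (c * Real.sqrt s ^ (n - k) * w k)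
        = c * (Real.sqrt s ^ (n - k) * Real.sqrt s ^ (n - k)) * w k := by ring
      _ = c * s ^ (n - k) * w k := by rw [hss]
  have h2 : ∀ k : ℕ, (Real.sqrt s ^ (n - k)) ^ 2 = s ^ (n - k) := by
    intro k; rw [sq, hss]
  have h3 : ∀ k, (c * Real.sqrt s ^ (n - k) * w k) ^ 2
      = c ^ 2 * s ^ (n - k) * w k ^ 2 := by
    intro k
    calc (c * Real.sqrt s ^ (n - k) * w k) ^ 2
        = c ^ 2 * (Real.sqrt s ^ (n - k) * Real.sqrt s ^ (n - k)) * w k ^ 2 := by ring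
      _ = _ := by rw [hss]
  simp only [h1, h2, h3] at hCS
  exact hCS

lemma Zv_eq_sum (N : ℕ) (S : Matrix (Fin d) (Fin d) ℝ)
    (z : Fin (N + 2) × Fin d → ℝ) (n : ℕ) :
    Zv N z n = ∑ k ∈ range (n + 1), (S ^ (n - k)) *ᵥ Wv N S z k := by
  induction n with
  | zero => simp [Wv]
  | succ n ih =>
    have hrec : Zv N z (n + 1) = S *ᵥ Zv N z n + Wv N S z (n + 1) := by
      show Zv N z (n + 1) = S *ᵥ Zv N z n + (Zv N z (n + 1) - S *ᵥ Zv N z n)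
      abel
    rw [hrec, ih,
      Finset.sum_range_succ (fun k => (S ^ (n + 1 - k)) *ᵥ Wv N S z k) (n + 1)]
    congr 1
    · have hlin : S *ᵥ ∑ k ∈ range (n + 1), (S ^ (n - k)) *ᵥ Wv N S z k
          = ∑ k ∈ range (n + 1), S *ᵥ ((S ^ (n - k)) *ᵥ Wv N S z k) := by
        rw [← Matrix.mulVecLin_apply, map_sum]
        simp [Matrix.mulVecLin_apply]
      rw [hlin]
      refine Finset.sum_congr rfl fun k hk => ?_
      simp only [mem_range] at hk
      rw [mulVec_mulVec, show S * S ^ (n - k) = S ^ (n + 1 - k) by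
        rw [← pow_succ']; congr 1; omega]
    · simp [Wv]

lemma nrZ_le {c s : ℝ} (N : ℕ) (S : Matrix (Fin d) (Fin d) ℝ)
    (hSn : ∀ n : ℕ, ‖Matrix.toEuclideanCLM (𝕜 := ℝ) (S ^ n)‖ ≤ c * s ^ n)
    (z : Fin (N + 2) × Fin d → ℝ) (n : ℕ) :
    nr (Zv N z n) ≤ ∑ k ∈ range (n + 1), c * s ^ (n - k) * nr (Wv N S z k) := by
  rw [Zv_eq_sum N S z n, nr, map_sum]
  refine (norm_sum_le _ _).trans ?_
  refine Finset.sum_le_sum fun k _ => ?_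
  have h1 : ‖E ((S ^ (n - k)) *ᵥ Wv N S z k)‖ = nr ((S ^ (n - k)) *ᵥ Wv N S z k) := rfl
  rw [h1]
  refine (nr_mulVec_le _ _).trans ?_
  exact mul_le_mul_of_nonneg_right (hSn (n - k)) (nr_nonneg _)

lemma sum_sq_le {c s : ℝ} (hs0 : 0 < s) (hs1 : s < 1) (hc : 0 < c)
    (N : ℕ) (S : Matrix (Fin d) (Fin d) ℝ)
    (hSn : ∀ n : ℕ, ‖Matrix.toEuclideanCLM (𝕜 := ℝ) (S ^ n)‖ ≤ c * s ^ n)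
    (z : Fin (N + 2) × Fin d → ℝ) :
    ∑ n ∈ range (N + 2), nr (Zv N z n) ^ 2
      ≤ c ^ 2 / (1 - s) ^ 2 * ∑ k ∈ range (N + 2), nr (Wv N S z k) ^ 2 := by
  set w : ℕ → ℝ := fun k => nr (Wv N S z k) with hw
  have hstep : ∀ n, nr (Zv N z n) ^ 2
      ≤ (1 / (1 - s)) * ∑ k ∈ range (n + 1), c ^ 2 * s ^ (n - k) * w k ^ 2 := by
    intro n
    have h0 : nr (Zv N z n) ^ 2 ≤ (∑ k ∈ range (n + 1), c * s ^ (n - k) * w k) ^ 2 :=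
      pow_le_pow_left₀ (nr_nonneg _) (nrZ_le N S hSn z n) 2
    have hcs := cs_step (c := c) hs0 n w
    have hgeo : ∑ k ∈ range (n + 1), s ^ (n - k) ≤ 1 / (1 - s) := by
      have hrefl := Finset.sum_range_reflect (fun j => s ^ j) (n + 1)
      have heq : ∑ k ∈ range (n + 1), s ^ (n - k) = ∑ j ∈ range (n + 1), s ^ j := by
        rw [← hrefl]
        exact Finset.sum_congr rfl fun k _ => by congr 1 <;> omega
      rw [heq]; exact geo_le hs0 hs1 _
    have hpos : 0 ≤ ∑ k ∈ range (n + 1), c ^ 2 * s ^ (n - k) * w k ^ 2 :=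
      Finset.sum_nonneg fun k _ => by positivity
    calc nr (Zv N z n) ^ 2 ≤ _ := h0.trans hcs
      _ ≤ (1 / (1 - s)) * ∑ k ∈ range (n + 1), c ^ 2 * s ^ (n - k) * w k ^ 2 :=
        mul_le_mul_of_nonneg_right hgeo hpos
  have h1 : ∑ n ∈ range (N + 2), nr (Zv N z n) ^ 2
      ≤ (1 / (1 - s)) * ∑ n ∈ range (N + 2),
          ∑ k ∈ range (n + 1), c ^ 2 * s ^ (n - k) * w k ^ 2 := by
    rw [Finset.mul_sum]
    exact Finset.sum_le_sum fun n _ => hstep n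
  rw [sum_tri (N + 2) (fun n k => c ^ 2 * s ^ (n - k) * w k ^ 2)] at h1
  have h2 : ∀ k ∈ range (N + 2), ∑ n ∈ Ico k (N + 2), c ^ 2 * s ^ (n - k) * w k ^ 2
      ≤ c ^ 2 * w k ^ 2 * (1 / (1 - s)) := by
    intro k _
    have he : ∑ n ∈ Ico k (N + 2), c ^ 2 * s ^ (n - k) * w k ^ 2
        = c ^ 2 * w k ^ 2 * ∑ j ∈ range (N + 2 - k), s ^ j := by
      rw [Finset.sum_Ico_eq_sum_range, Finset.mul_sum]
      exact Finset.sum_congr rfl fun j _ => by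
        rw [show k + j - k = j by omega]; ring
    rw [he]
    exact mul_le_mul_of_nonneg_left (geo_le hs0 hs1 _) (by positivity)
  have h3 : ∑ k ∈ range (N + 2), ∑ n ∈ Ico k (N + 2), c ^ 2 * s ^ (n - k) * w k ^ 2
      ≤ ∑ k ∈ range (N + 2), c ^ 2 * w k ^ 2 * (1 / (1 - s)) :=
    Finset.sum_le_sum h2
  have h4 := h1.trans (mul_le_mul_of_nonneg_left h3
    (div_nonneg zero_le_one (by linarith)))
  calc ∑ n ∈ range (N + 2), nr (Zv N z n) ^ 2
      ≤ (1 / (1 - s)) * ∑ k ∈ range (N + 2), c ^ 2 * w k ^ 2 * (1 / (1 - s)) := h4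
    _ = c ^ 2 / (1 - s) ^ 2 * ∑ k ∈ range (N + 2), w k ^ 2 := by
        rw [Finset.mul_sum, Finset.mul_sum]
        refine Finset.sum_congr rfl fun k _ => ?_
        have hne : (1 : ℝ) - s ≠ 0 := by linarith
        field_simp

end PMAux

/-- uniform positive lower bound on the smallest eigenvalue of the
precision matrices `Σ_N⁻¹`, with
`σ = min(1, λ_min(Σₒ⁻¹))·(1−s)²/c²` where `‖Sⁿ‖ ≤ c sⁿ`. -/
theorem precisionMatrix_uniform_rayleigh_lower_bound {d : ℕ}
    (S So : Matrix (Fin d) (Fin d) ℝ)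
    (hρ : spectralRadius ℝ S < 1) (hSo : So.PosDef)
    (c s : ℝ) (hs0 : 0 < s) (hs1 : s < 1) (hc : 0 < c)
    (hSn : ∀ n : ℕ, ‖Matrix.toEuclideanCLM (𝕜 := ℝ) (S ^ n)‖ ≤ c * s ^ n)
    (mo : ℝ) (hmo : 0 < mo)
    (hmSo : ∀ z : Fin d → ℝ, mo * (z ⬝ᵥ z) ≤ z ⬝ᵥ So⁻¹.mulVec z) :
    0 < min 1 mo * (1 - s) ^ 2 / c ^ 2 ∧
    ∀ N : ℕ, 1 ≤ N → ∀ z : Fin (N + 2) × Fin d → ℝ,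
      (min 1 mo * (1 - s) ^ 2 / c ^ 2) * (z ⬝ᵥ z)
        ≤ z ⬝ᵥ (precisionMatrix N S So⁻¹).mulVec z := by
  classical
  open PMAux Finset in
  have hm : 0 < min 1 mo := lt_min one_pos hmo
  have h1s : 0 < 1 - s := by linarith
  refine ⟨div_pos (mul_pos hm (by positivity)) (by positivity), ?_⟩
  intro N _ z
  -- abbreviations
  set A := ∑ k ∈ range (N + 2), nr (Wv N S z k) ^ 2 with hA
  set B := ∑ n ∈ range (N + 2), nr (Zv N z n) ^ 2 with hB
  -- z ⬝ᵥ z = B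
  have hzB : z ⬝ᵥ z = B := by
    rw [hB]
    have e1 : z ⬝ᵥ z = ∑ m : Fin (N + 2), (Zv N z (m : ℕ)) ⬝ᵥ (Zv N z (m : ℕ)) := by
      simp only [dotProduct]
      rw [Fintype.sum_prod_type]
      exact Finset.sum_congr rfl fun m _ => by rw [Zv_coe N z m]
    rw [e1]
    rw [Fin.sum_univ_eq_sum_range (fun a => (Zv N z a) ⬝ᵥ (Zv N z a)) (N + 2)]
    exact Finset.sum_congr rfl fun a _ => dot_self_eq_nr_sq _
  -- quadratic form lower bound by min(1,mo) * A
  have hQA : min 1 mo * A ≤ z ⬝ᵥ (precisionMatrix N S So⁻¹) *ᵥ z := by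
    rw [quad_form_eq N S So⁻¹ z]
    have hsplit : A = nr (Wv N S z 0) ^ 2
        + ∑ a ∈ range (N + 1), nr (Wv N S z (a + 1)) ^ 2 := by
      rw [hA, Finset.sum_range_succ' (fun k => nr (Wv N S z k) ^ 2) (N + 1)]
      ring
    rw [hsplit, mul_add, Finset.mul_sum]
    have hterm1 : min 1 mo * nr (Wv N S z 0) ^ 2 ≤ Zv N z 0 ⬝ᵥ So⁻¹ *ᵥ Zv N z 0 := by
      have hW0 : (Wv N S z 0 : Fin d → ℝ) = Zv N z 0 := rfl
      have h1 := hmSo (Zv N z 0)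
      have h2 : min 1 mo * nr (Wv N S z 0) ^ 2 ≤ mo * nr (Wv N S z 0) ^ 2 :=
        mul_le_mul_of_nonneg_right (min_le_right _ _) (by positivity)
      refine h2.trans ?_
      rw [hW0, ← dot_self_eq_nr_sq]
      exact h1
    have hterm2 : ∀ a ∈ range (N + 1),
        min 1 mo * nr (Wv N S z (a + 1)) ^ 2
          ≤ Wv N S z (a + 1) ⬝ᵥ Wv N S z (a + 1) := by
      intro a _
      rw [dot_self_eq_nr_sq]
      calc min 1 mo * nr (Wv N S z (a + 1)) ^ 2
          ≤ 1 * nr (Wv N S z (a + 1)) ^ 2 :=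
            mul_le_mul_of_nonneg_right (min_le_left _ _) (by positivity)
        _ = _ := one_mul _
    exact add_le_add hterm1 (Finset.sum_le_sum hterm2)
  -- B vs A
  have hBA : (1 - s) ^ 2 / c ^ 2 * B ≤ A := by
    have hsum := sum_sq_le hs0 hs1 hc N S hSn z
    rw [← hB, ← hA] at hsum
    have h5 := mul_le_mul_of_nonneg_left hsum
      (le_of_lt (div_pos (by positivity) (by positivity) :
        (0 : ℝ) < (1 - s) ^ 2 / c ^ 2))
    calc (1 - s) ^ 2 / c ^ 2 * B ≤ (1 - s) ^ 2 / c ^ 2 * (c ^ 2 / (1 - s) ^ 2 * A) := h5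
      _ = A := by field_simp
  -- conclude
  calc min 1 mo * (1 - s) ^ 2 / c ^ 2 * (z ⬝ᵥ z)
      = min 1 mo * ((1 - s) ^ 2 / c ^ 2 * B) := by rw [hzB]; ring
    _ ≤ min 1 mo * A := mul_le_mul_of_nonneg_left hBA hm.le
    _ ≤ z ⬝ᵥ (precisionMatrix N S So⁻¹) *ᵥ z := hQA
end

section
/- Let Y₁, …, Y_m be independent standard Gaussian random variables on a probability space, let a₁,…,a_m be real numbers with Σ|a_l| ≤ 1, and fix ε > 0. Then there exists p > 0, depending only on ε (not on m or on the a_l), such that P[|Σ_{l=1}^m a_l(Y_l² − 1)| < ε] ≥ p. -/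
open MeasureTheory ProbabilityTheory Real Set
open scoped ENNReal NNReal

set_option linter.unusedSectionVars false

lemma bd_integrable_pow_gauss (k : ℕ) :
    Integrable (fun x : ℝ => x ^ k * Real.exp (-(1/2) * x ^ 2)) := by
  have h := integrable_rpow_mul_exp_neg_mul_sq (b := 1/2) (by norm_num) (s := (k : ℝ))
    (by exact_mod_cast neg_one_lt_zero.trans_le (Nat.cast_nonneg k))
  simpa [Real.rpow_natCast] using h

lemma bd_rpow_two (x : ℝ) : x ^ (2:ℝ) = x ^ 2 := by
  rw [show (2:ℝ) = ((2:ℕ):ℝ) by norm_num, Real.rpow_natCast]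

lemma bd_integral_pow_exp_even {q : ℕ} (hq : Even q) :
    ∫ x : ℝ, x ^ q * Real.exp (-(1/2) * x ^ 2)
      = Real.sqrt 2 ^ (q + 1) * Real.Gamma (((q:ℝ) + 1) / 2) := by
  have hint := bd_integrable_pow_gauss q
  set f : ℝ → ℝ := fun x => x ^ q * Real.exp (-(1/2) * x ^ 2) with hf
  have hsplit : (∫ x in Iic (0:ℝ), f x) + (∫ x in Ioi (0:ℝ), f x) = ∫ x, f x :=
    intervalIntegral.integral_Iic_add_Ioi hint.integrableOn hint.integrableOn
  have hneg : (∫ x in Iic (0:ℝ), f x) = ∫ x in Ioi (0:ℝ), f x := by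
    have h1 := integral_comp_neg_Ioi (0:ℝ) f
    rw [neg_zero] at h1
    rw [← h1]
    congr 1 with x
    simp only [hf]
    rw [hq.neg_pow, neg_sq]
  -- substitution on Ioi 0
  have hs2 : (0:ℝ) < Real.sqrt 2 := Real.sqrt_pos.mpr (by norm_num)
  set c : ℝ := (Real.sqrt 2)⁻¹ with hc
  have hcpos : 0 < c := inv_pos.mpr hs2
  set g : ℝ → ℝ := fun u => u ^ ((q:ℝ)) * Real.exp (-u ^ (2:ℝ)) with hg
  have hgsimp : ∀ u : ℝ, g u = u ^ q * Real.exp (-u ^ 2) := by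
    intro u; rw [hg]; simp only [Real.rpow_natCast, bd_rpow_two]
  have hpt : ∀ x : ℝ, f x = Real.sqrt 2 ^ q * g (c * x) := by
    intro x
    rw [hgsimp]
    have h2 : (Real.sqrt 2) ^ 2 = 2 := Real.sq_sqrt (by norm_num)
    have hcx2 : (c * x) ^ 2 = (1/2) * x ^ 2 := by
      rw [mul_pow, hc, inv_pow, h2]; ring
    have hmul : Real.sqrt 2 ^ q * (c * x) ^ q = x ^ q := by
      rw [← mul_pow, hc]
      rw [show Real.sqrt 2 * ((Real.sqrt 2)⁻¹ * x) = x by field_simp]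
    rw [hf, hcx2]
    calc x ^ q * Real.exp (-((1:ℝ)/2) * x ^ 2)
        = (Real.sqrt 2 ^ q * (c * x) ^ q) * Real.exp (-((1/2) * x ^ 2)) := by
          rw [hmul]; ring_nf
      _ = Real.sqrt 2 ^ q * ((c * x) ^ q * Real.exp (-((1/2) * x ^ 2))) := by ring
  have hIoi : (∫ x in Ioi (0:ℝ), f x)
      = Real.sqrt 2 ^ q * (Real.sqrt 2 * ((1/2) * Real.Gamma (((q:ℝ) + 1) / 2))) := by
    have e1 : (∫ x in Ioi (0:ℝ), f x) = ∫ x in Ioi (0:ℝ), Real.sqrt 2 ^ q * g (c * x) := by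
      exact integral_congr_ae (ae_of_all _ fun x => hpt x)
    rw [e1, integral_const_mul]
    congr 1
    have e2 := integral_comp_mul_left_Ioi g 0 hcpos
    rw [mul_zero] at e2
    rw [e2, smul_eq_mul, hc, inv_inv]
    congr 1
    have e3 := integral_rpow_mul_exp_neg_rpow (p := (2:ℝ)) (q := (q:ℝ)) (by norm_num)
      (by exact_mod_cast neg_one_lt_zero.trans_le (Nat.cast_nonneg q))
    rw [e3]
  rw [← hsplit, hneg, hIoi, pow_succ]
  ring

lemma bd_pdf_eq (x : ℝ) :
    gaussianPDFReal 0 1 x = (Real.sqrt (2 * π))⁻¹ * Real.exp (-(1/2) * x ^ 2) := by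
  simp only [gaussianPDFReal, NNReal.coe_one, mul_one, sub_zero]
  congr 1
  ring

lemma bd_density_meas : Measurable (fun x : ℝ => (gaussianPDFReal 0 1 x).toNNReal) :=
  (measurable_gaussianPDFReal 0 1).real_toNNReal

lemma bd_density_eq :
    gaussianPDF 0 1 = fun x => ((gaussianPDFReal 0 1 x).toNNReal : ℝ≥0∞) := rfl

lemma bd_integral_gaussian_real (f : ℝ → ℝ) :
    ∫ x, f x ∂(gaussianReal 0 1) = ∫ x, gaussianPDFReal 0 1 x * f x := by
  rw [gaussianReal_of_var_ne_zero 0 one_ne_zero, bd_density_eq,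
    integral_withDensity_eq_integral_smul bd_density_meas f]
  congr 1 with x
  rw [NNReal.smul_def, Real.coe_toNNReal _ (gaussianPDFReal_nonneg 0 1 x), smul_eq_mul]

lemma bd_mom (q : ℕ) (hq : Even q) :
    ∫ x, x ^ q ∂(gaussianReal 0 1)
      = (Real.sqrt (2 * π))⁻¹ * (Real.sqrt 2 ^ (q + 1) * Real.Gamma (((q:ℝ) + 1) / 2)) := by
  rw [bd_integral_gaussian_real (fun x => x ^ q)]
  have h : ∀ x : ℝ, gaussianPDFReal 0 1 x * x ^ q
      = (Real.sqrt (2 * π))⁻¹ * (x ^ q * Real.exp (-(1/2) * x ^ 2)) := by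
    intro x; rw [bd_pdf_eq]; ring
  simp_rw [h]
  rw [integral_const_mul, bd_integral_pow_exp_even hq]

lemma bd_sqrt_two_pi : Real.sqrt (2 * π) = Real.sqrt 2 * Real.sqrt π :=
  Real.sqrt_mul (by norm_num) π

lemma bd_mom2 : ∫ x, x ^ 2 ∂(gaussianReal 0 1) = 1 := by
  rw [bd_mom 2 ⟨1, rfl⟩]
  have h32 : (((2:ℕ):ℝ) + 1) / 2 = 1/2 + 1 := by norm_num
  rw [h32, Real.Gamma_add_one (by norm_num), Real.Gamma_one_half_eq]
  have h2 : (Real.sqrt 2) ^ 2 = 2 := Real.sq_sqrt (by norm_num)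
  have hs2 : (0:ℝ) < Real.sqrt 2 := Real.sqrt_pos.mpr (by norm_num)
  have hsp : (0:ℝ) < Real.sqrt π := Real.sqrt_pos.mpr Real.pi_pos
  rw [bd_sqrt_two_pi, pow_succ, h2]
  field_simp

lemma bd_mom4 : ∫ x, x ^ 4 ∂(gaussianReal 0 1) = 3 := by
  rw [bd_mom 4 ⟨2, rfl⟩]
  have h52 : (((4:ℕ):ℝ) + 1) / 2 = 3/2 + 1 := by norm_num
  have h32 : (3/2 : ℝ) = 1/2 + 1 := by norm_num
  rw [h52, Real.Gamma_add_one (by norm_num), h32, Real.Gamma_add_one (by norm_num),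
    Real.Gamma_one_half_eq]
  have h2 : (Real.sqrt 2) ^ 2 = 2 := Real.sq_sqrt (by norm_num)
  have hs2 : (0:ℝ) < Real.sqrt 2 := Real.sqrt_pos.mpr (by norm_num)
  have hsp : (0:ℝ) < Real.sqrt π := Real.sqrt_pos.mpr Real.pi_pos
  have h5 : Real.sqrt 2 ^ (4+1) = 4 * Real.sqrt 2 := by
    rw [show (4+1) = 2+(2+1) from rfl, pow_add, pow_add, h2, pow_one]
    ring
  rw [bd_sqrt_two_pi, h5]
  field_simp
  ring

lemma bd_integrable_pow (k : ℕ) :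
    Integrable (fun x : ℝ => x ^ k) (gaussianReal 0 1) := by
  rw [gaussianReal_of_var_ne_zero 0 one_ne_zero, bd_density_eq,
    integrable_withDensity_iff_integrable_smul bd_density_meas]
  have h : ∀ x : ℝ, (gaussianPDFReal 0 1 x).toNNReal • (x ^ k)
      = (Real.sqrt (2 * π))⁻¹ * (x ^ k * Real.exp (-(1/2) * x ^ 2)) := by
    intro x
    rw [NNReal.smul_def, Real.coe_toNNReal _ (gaussianPDFReal_nonneg 0 1 x), smul_eq_mul,
      bd_pdf_eq]
    ring
  exact (((bd_integrable_pow_gauss k).const_mul _).congr (ae_of_all _ fun x => (h x).symm))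

-- facts about Z = Y^2 - 1 under the Gaussian law
lemma bd_int_sq_gauss : Integrable (fun x : ℝ => (x ^ 2 - 1) ^ 2) (gaussianReal 0 1) := by
  have h : Integrable (fun x : ℝ => x ^ 4 - 2 * x ^ 2 + 1) (gaussianReal 0 1) :=
    (((bd_integrable_pow 4).sub ((bd_integrable_pow 2).const_mul 2)).add (integrable_const 1))
  exact h.congr (ae_of_all _ fun x => by ring)

lemma bd_int_gauss : Integrable (fun x : ℝ => x ^ 2 - 1) (gaussianReal 0 1) :=
  (bd_integrable_pow 2).sub (integrable_const 1)

lemma bd_integral_Z : ∫ x, (x ^ 2 - 1) ∂(gaussianReal 0 1) = 0 := by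
  rw [integral_sub (bd_integrable_pow 2) (integrable_const 1), bd_mom2]
  simp

lemma bd_integral_Zsq : ∫ x, (x ^ 2 - 1) ^ 2 ∂(gaussianReal 0 1) = 2 := by
  have h : (fun x : ℝ => (x ^ 2 - 1) ^ 2)
      = fun x : ℝ => x ^ 4 - 2 * x ^ 2 + 1 := by funext x; ring
  have hI2' : Integrable (fun x : ℝ => 2 * x ^ 2) (gaussianReal 0 1) :=
    (bd_integrable_pow 2).const_mul 2
  have hI42 : Integrable (fun x : ℝ => x ^ 4 - 2 * x ^ 2) (gaussianReal 0 1) :=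
    (bd_integrable_pow 4).sub hI2'
  rw [h, integral_add hI42 (integrable_const 1),
    integral_sub (bd_integrable_pow 4) hI2', integral_const_mul, bd_mom4, bd_mom2]
  simp
  norm_num

section Main

variable {Ω : Type} [MeasurableSpace Ω] {P : Measure Ω} [IsProbabilityMeasure P]
variable {Y : Ω → ℝ}

-- transfer: Z := fun ω => Y ω ^ 2 - 1
lemma bd_memLp_Z (hYm : Measurable Y) (hYl : Measure.map Y P = gaussianReal 0 1) :
    MemLp (fun ω => Y ω ^ 2 - 1) 2 P := by
  have hcont : Continuous (fun x : ℝ => (x ^ 2 - 1) ^ 2) := by continuity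
  have hiff := integrable_map_measure (f := Y) (g := fun x : ℝ => (x ^ 2 - 1) ^ 2)
    (by rw [hYl]; exact hcont.aestronglyMeasurable) hYm.aemeasurable
  rw [hYl] at hiff
  have hint : Integrable (fun ω => (Y ω ^ 2 - 1) ^ 2) P := hiff.mp bd_int_sq_gauss
  have haes : AEStronglyMeasurable (fun ω => Y ω ^ 2 - 1) P :=
    ((hYm.pow_const 2).sub measurable_const).aestronglyMeasurable
  rw [memLp_two_iff_integrable_sq haes]
  exact hint

lemma bd_EZ (hYm : Measurable Y) (hYl : Measure.map Y P = gaussianReal 0 1) :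
    ∫ ω, (Y ω ^ 2 - 1) ∂P = 0 := by
  have hcont : Continuous (fun x : ℝ => x ^ 2 - 1) := by continuity
  have h := integral_map (φ := Y) (f := fun x : ℝ => x ^ 2 - 1) hYm.aemeasurable
    (by rw [hYl]; exact hcont.aestronglyMeasurable)
  rw [hYl, bd_integral_Z] at h
  exact h.symm

lemma bd_EZsq (hYm : Measurable Y) (hYl : Measure.map Y P = gaussianReal 0 1) :
    ∫ ω, (Y ω ^ 2 - 1) ^ 2 ∂P = 2 := by
  have hcont : Continuous (fun x : ℝ => (x ^ 2 - 1) ^ 2) := by continuity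
  have h := integral_map (φ := Y) (f := fun x : ℝ => (x ^ 2 - 1) ^ 2) hYm.aemeasurable
    (by rw [hYl]; exact hcont.aestronglyMeasurable)
  rw [hYl, bd_integral_Zsq] at h
  exact h.symm

lemma bd_varZ (hYm : Measurable Y) (hYl : Measure.map Y P = gaussianReal 0 1) :
    variance (fun ω => Y ω ^ 2 - 1) P = 2 := by
  rw [variance_eq_sub (bd_memLp_Z hYm hYl)]
  have h1 : (fun ω => Y ω ^ 2 - 1) ^ 2 = fun ω => (Y ω ^ 2 - 1) ^ 2 := rfl
  rw [h1, bd_EZsq hYm hYl, bd_EZ hYm hYl]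
  norm_num

end Main

/-- Gaussian instance of the Bryc–Dembo small-ball lemma: for
independent standard Gaussians `Y₁,…,Y_m` and weights with `Σ|a_l| ≤ 1`, the
probability that `|Σ a_l (Y_l² − 1)| < ε` is bounded below by some `p > 0`
depending only on `ε`. -/
theorem bryc_dembo_gaussian_small_ball (ε : ℝ) (hε : 0 < ε) :
    ∃ p : ℝ, 0 < p ∧
      ∀ (Ω : Type) (_ : MeasurableSpace Ω) (P : Measure Ω), IsProbabilityMeasure P →
        ∀ (m : ℕ) (Y : Fin m → Ω → ℝ),
          (∀ l, Measurable (Y l)) →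
          (∀ l, Measure.map (Y l) P = gaussianReal 0 1) →
          iIndepFun Y P →
          ∀ a : Fin m → ℝ, (∑ l, |a l|) ≤ 1 →
            ENNReal.ofReal p ≤ P {ω | |∑ l, a l * ((Y l ω) ^ 2 - 1)| < ε} := by
  classical
  set δ : ℝ := ε ^ 2 / 16 with hδdef
  have hδ : 0 < δ := by positivity
  set K : ℕ := ⌈16 / ε ^ 2⌉₊ + 1 with hKdef
  have hKR : (0:ℝ) < (K : ℝ) := by
    have : 0 < K := Nat.succ_pos _
    exact_mod_cast this
  set t : ℝ := ε / (2 * K) with htdef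
  have ht : 0 < t := div_pos hε (by linarith)
  set B : Set ℝ := {x : ℝ | |x ^ 2 - 1| < t} with hBdef
  have hB : MeasurableSet B :=
    measurableSet_lt ((measurable_id.pow_const 2).sub measurable_const).abs measurable_const
  have hGBne : gaussianReal 0 1 B ≠ 0 := by
    set s : ℝ := min t 1 with hsdef
    have hs0 : 0 < s := lt_min ht one_pos
    have hst : s ≤ t := min_le_left _ _
    have hs1 : s ≤ 1 := min_le_right _ _
    have hsub : Ioo (1:ℝ) (1 + s/3) ⊆ B := by
      intro x hx
      obtain ⟨hx1, hx2⟩ := hx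
      simp only [hBdef, Set.mem_setOf_eq]
      rw [abs_of_pos (by nlinarith : (0:ℝ) < x ^ 2 - 1)]
      nlinarith
    intro h0
    have hvz : (volume : Measure ℝ) B = 0 :=
      gaussianReal_absolutelyContinuous' 0 one_ne_zero h0
    have hIoo := measure_mono_null hsub hvz
    rw [Real.volume_Ioo] at hIoo
    rw [ENNReal.ofReal_eq_zero] at hIoo
    linarith
  have hGBfin : gaussianReal 0 1 B ≠ ⊤ := measure_ne_top _ _
  set q' : ℝ := (gaussianReal 0 1 B).toReal with hq'def
  have hq'pos : 0 < q' := ENNReal.toReal_pos hGBne hGBfin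
  have hq'le1 : gaussianReal 0 1 B ≤ 1 := prob_le_one
  refine ⟨q' ^ K * (1/2), by positivity, ?_⟩
  intro Ω mΩ P hP m Y hYmeas hYlaw hYindep a ha
  set W : Fin m → Ω → ℝ := fun l ω => a l * (Y l ω ^ 2 - 1) with hWdef
  have hWmeas : ∀ l, Measurable (W l) := fun l =>
    (((hYmeas l).pow_const 2).sub measurable_const).const_mul _
  have ha1 : ∀ l, |a l| ≤ 1 := fun l =>
    le_trans (Finset.single_le_sum (fun i _ => abs_nonneg (a i)) (Finset.mem_univ l)) ha
  set big : Finset (Fin m) := Finset.univ.filter (fun l => δ < |a l|) with hbigdef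
  set small : Finset (Fin m) := Finset.univ.filter (fun l => ¬ δ < |a l|) with hsmalldef
  have hcard : big.card ≤ K := by
    have h1 : (big.card : ℝ) * δ ≤ 1 := by
      calc (big.card : ℝ) * δ = ∑ _l ∈ big, δ := by rw [Finset.sum_const, nsmul_eq_mul]
        _ ≤ ∑ l ∈ big, |a l| :=
            Finset.sum_le_sum (fun l hl => le_of_lt (Finset.mem_filter.mp hl).2)
        _ ≤ ∑ l, |a l| :=
            Finset.sum_le_sum_of_subset_of_nonneg (Finset.subset_univ _)
              (fun i _ _ => abs_nonneg _)
        _ ≤ 1 := ha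
    have h2 : (big.card : ℝ) ≤ 16 / ε ^ 2 := by
      rw [hδdef] at h1
      rw [le_div_iff₀ (by positivity)]
      nlinarith
    have h3 : (big.card : ℝ) ≤ (K : ℝ) := by
      refine h2.trans ?_
      rw [hKdef]
      push_cast
      have := Nat.le_ceil (16 / ε ^ 2)
      linarith
    exact_mod_cast h3
  set T : Ω → ℝ := fun ω => ∑ l ∈ small, W l ω with hTdef
  have hTmeas : Measurable T := by
    apply Finset.measurable_sum
    exact fun l _ => hWmeas l
  have he : (∑ l ∈ small, W l) = T := by
    funext ω
    simp [hTdef]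
  have hWmem : ∀ l, MemLp (W l) 2 P := fun l =>
    (bd_memLp_Z (hYmeas l) (hYlaw l)).const_mul (a l)
  have hTmem : MemLp T 2 P := by
    have h := memLp_finset_sum' (μ := P) (p := 2) small (fun l _ => hWmem l)
    rwa [he] at h
  have hEW : ∀ l, ∫ ω, W l ω ∂P = 0 := fun l => by
    simp only [hWdef]
    rw [integral_const_mul, bd_EZ (hYmeas l) (hYlaw l), mul_zero]
  have hET : ∫ ω, T ω ∂P = 0 := by
    simp only [hTdef]
    rw [integral_finset_sum small (fun l _ => ((hWmem l).integrable one_le_two))]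
    exact Finset.sum_eq_zero (fun l _ => hEW l)
  have hVarW : ∀ l, variance (W l) P = a l ^ 2 * 2 := fun l => by
    have h := variance_const_mul (a l) (fun ω => Y l ω ^ 2 - 1) P
    rw [bd_varZ (hYmeas l) (hYlaw l)] at h
    exact h
  have hpair : Set.Pairwise ↑small (fun i j => IndepFun (W i) (W j) P) := by
    intro i _ j _ hij
    have hmi : Measurable (fun x : ℝ => a i * (x ^ 2 - 1)) :=
      ((measurable_id.pow_const 2).sub measurable_const).const_mul _
    have hmj : Measurable (fun x : ℝ => a j * (x ^ 2 - 1)) :=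
      ((measurable_id.pow_const 2).sub measurable_const).const_mul _
    exact (hYindep.indepFun hij).comp hmi hmj
  have hVarT : variance T P ≤ 2 * δ := by
    have h := ProbabilityTheory.IndepFun.variance_sum (μ := P) (X := W) (s := small)
      (fun l _ => hWmem l) hpair
    rw [he] at h
    calc variance T P = ∑ l ∈ small, variance (W l) P := h
      _ = ∑ l ∈ small, a l ^ 2 * 2 := Finset.sum_congr rfl (fun l _ => hVarW l)
      _ ≤ ∑ l ∈ small, 2 * δ * |a l| := by
          refine Finset.sum_le_sum (fun l hl => ?_)
          have hla : |a l| ≤ δ := not_lt.mp (Finset.mem_filter.mp hl).2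
          have : a l ^ 2 = |a l| * |a l| := by rw [← abs_mul, abs_of_nonneg (mul_self_nonneg _), ← pow_two]
          nlinarith [abs_nonneg (a l)]
      _ = 2 * δ * ∑ l ∈ small, |a l| := by rw [Finset.mul_sum]
      _ ≤ 2 * δ * 1 := by
          refine mul_le_mul_of_nonneg_left ?_ (by positivity)
          refine le_trans (Finset.sum_le_sum_of_subset_of_nonneg (Finset.subset_univ _)
            (fun i _ _ => abs_nonneg _)) ha
      _ = 2 * δ := mul_one _
  have hceb : P {ω | ε/2 ≤ |T ω|} ≤ ENNReal.ofReal (1/2) := by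
    have h := meas_ge_le_variance_div_sq (μ := P) hTmem (half_pos hε)
    simp only [hET, sub_zero] at h
    refine h.trans (ENNReal.ofReal_le_ofReal ?_)
    rw [div_le_iff₀ (by positivity)]
    rw [hδdef] at hVarT
    nlinarith
  have hE2meas : MeasurableSet {ω | ε/2 ≤ |T ω|} :=
    measurableSet_le measurable_const hTmeas.abs
  have hE2 : ENNReal.ofReal (1/2) ≤ P {ω | |T ω| < ε/2} := by
    have hcompl : {ω | |T ω| < ε/2} = {ω | ε/2 ≤ |T ω|}ᶜ := by
      ext ω; simp [not_le]
    rw [hcompl, measure_compl hE2meas (measure_ne_top _ _), measure_univ]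
    refine ENNReal.le_sub_of_add_le_left (measure_ne_top _ _) ?_
    calc P {ω | ε/2 ≤ |T ω|} + ENNReal.ofReal (1/2)
        ≤ ENNReal.ofReal (1/2) + ENNReal.ofReal (1/2) := add_le_add hceb le_rfl
      _ = 1 := by
          rw [← ENNReal.ofReal_add (by norm_num) (by norm_num)]
          norm_num
  have hdisj : Disjoint big small :=
    Finset.disjoint_filter_filter_not Finset.univ Finset.univ _
  have hIF := hYindep.indepFun_finset big small hdisj hYmeas
  set A1 : Set ((i : big) → ℝ) := ⋂ i : big, (fun y : (i : big) → ℝ => y i) ⁻¹' B with hA1def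
  have hA1 : MeasurableSet A1 :=
    MeasurableSet.iInter (fun i => (measurable_pi_apply i) hB)
  set A2 : Set ((i : small) → ℝ) :=
    {y : (i : small) → ℝ | |∑ i : small, a i * (y i ^ 2 - 1)| < ε/2} with hA2def
  have hA2 : MeasurableSet A2 := by
    have hg2 : Measurable (fun y : (i : small) → ℝ => |∑ i : small, a i * (y i ^ 2 - 1)|) :=
      (Finset.measurable_sum Finset.univ (fun i _ =>
        (((measurable_pi_apply i).pow_const 2).sub measurable_const).const_mul _)).abs
    exact measurableSet_lt hg2 measurable_const
  have hprod := hIF.measure_inter_preimage_eq_mul A1 A2 hA1 hA2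
  have hset1 : (fun ω (i : big) => Y i ω) ⁻¹' A1 = ⋂ l ∈ big, Y l ⁻¹' B := by
    ext ω
    simp [hA1def, Set.mem_iInter, Subtype.forall]
  have hset2 : (fun ω (i : small) => Y i ω) ⁻¹' A2 = {ω | |T ω| < ε/2} := by
    ext ω
    simp only [Set.mem_preimage, hA2def, Set.mem_setOf_eq, hTdef]
    rw [Finset.sum_coe_sort small (fun l => a l * (Y l ω ^ 2 - 1))]
  have hPE1 : P (⋂ l ∈ big, Y l ⁻¹' B) = (gaussianReal 0 1 B) ^ big.card := by
    rw [hYindep.meas_biInter (fun l _ => ⟨B, hB, rfl⟩)]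
    rw [Finset.prod_congr rfl (fun l (_ : l ∈ big) => ?_), Finset.prod_const]
    rw [← hYlaw l, Measure.map_apply (hYmeas l) hB]
  have hsub : (⋂ l ∈ big, Y l ⁻¹' B) ∩ {ω | |T ω| < ε/2}
      ⊆ {ω | |∑ l, a l * ((Y l ω) ^ 2 - 1)| < ε} := by
    rintro ω ⟨h1, h2⟩
    have h1' : ∀ l ∈ big, |Y l ω ^ 2 - 1| < t := by
      intro l hl
      have := Set.mem_iInter₂.mp h1 l hl
      simpa [hBdef] using this
    have h2' : |∑ l ∈ small, W l ω| < ε/2 := h2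
    have hbig : |∑ l ∈ big, W l ω| ≤ ε/2 := by
      calc |∑ l ∈ big, W l ω| ≤ ∑ l ∈ big, |W l ω| := Finset.abs_sum_le_sum_abs _ _
        _ ≤ ∑ _l ∈ big, t := by
            refine Finset.sum_le_sum (fun l hl => ?_)
            have habs : |W l ω| = |a l| * |Y l ω ^ 2 - 1| := by
              simp only [hWdef]; rw [abs_mul]
            rw [habs]
            calc |a l| * |Y l ω ^ 2 - 1| ≤ 1 * t :=
                mul_le_mul (ha1 l) (le_of_lt (h1' l hl)) (abs_nonneg _) zero_le_one
              _ = t := one_mul t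
        _ = big.card * t := by rw [Finset.sum_const, nsmul_eq_mul]
        _ ≤ K * t := mul_le_mul_of_nonneg_right (by exact_mod_cast hcard) ht.le
        _ = ε/2 := by
            rw [htdef]
            field_simp
    have hsplitsum : ∑ l : Fin m, W l ω = (∑ l ∈ big, W l ω) + ∑ l ∈ small, W l ω :=
      (Finset.sum_filter_add_sum_filter_not Finset.univ _ _).symm
    show |∑ l : Fin m, W l ω| < ε
    calc |∑ l : Fin m, W l ω| ≤ |∑ l ∈ big, W l ω| + |∑ l ∈ small, W l ω| := by
          rw [hsplitsum]; exact abs_add_le _ _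
      _ < ε/2 + ε/2 := add_lt_add_of_le_of_lt hbig h2'
      _ = ε := by ring
  calc ENNReal.ofReal (q' ^ K * (1/2))
      = (gaussianReal 0 1 B) ^ K * ENNReal.ofReal (1/2) := by
        rw [ENNReal.ofReal_mul (by positivity), ENNReal.ofReal_pow hq'pos.le,
          hq'def, ENNReal.ofReal_toReal hGBfin]
    _ ≤ (gaussianReal 0 1 B) ^ big.card * P {ω | |T ω| < ε/2} :=
        mul_le_mul' (pow_le_pow_of_le_one (by simp) hq'le1 hcard) hE2
    _ = P (⋂ l ∈ big, Y l ⁻¹' B) * P {ω | |T ω| < ε/2} := by rw [hPE1]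
    _ = P ((⋂ l ∈ big, Y l ⁻¹' B) ∩ {ω | |T ω| < ε/2}) := by
        rw [← hset1, ← hset2, ← hprod]
    _ ≤ P {ω | |∑ l, a l * ((Y l ω) ^ 2 - 1)| < ε} := measure_mono hsub
end
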